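/- arXiv:math/0603667 — 6 statements merged into one kernel-verified Lean document; each statement's English description precedes it below -/
import Mathlib

section
/- Let G be a connected simple graph and I ⊆ V(G) a pre-cycle core of G. Then for every vertex s of G there exists a unique vertex x_s ∈ I such that some path in G from s to x_s contains no vertex of I other than x_s. Moreover, setting J_x = {s ∈ V(G) : x_s = x} for x ∈ I, the sets J_x are pairwise disjoint, V(G) = ⋃_{x∈I} J_x, J_x ∩ I = {x}, each induced subgraph G|_{J_x} is a tree, and every edge of G joins either two vertices of I or two vertices of a single set J_x. -/
namespace CoxPerp

/-! ### Graph-theoretic preliminaries -/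

variable {V : Type*}

/-- The subgraph of `G` induced on `I` (padded with isolated vertices). -/
def Restrict (G : SimpleGraph V) (I : Set V) : SimpleGraph V where
  Adj u v := u ∈ I ∧ v ∈ I ∧ G.Adj u v
  symm := ⟨fun u v ⟨hu, hv, h⟩ => ⟨hv, hu, h.symm⟩⟩
  loopless := ⟨fun u ⟨_, _, h⟩ => G.loopless.irrefl u h⟩

/-- The induced subgraph `G|_I` is connected (in particular nonempty). -/
def ConnectedOn (G : SimpleGraph V) (I : Set V) : Prop :=
  I.Nonempty ∧ ∀ u ∈ I, ∀ v ∈ I, (Restrict G I).Reachable u v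

/-- `C` is the vertex set of a cycle of `G` in the sense of the paper: a closed path
`x_0, …, x_{n-1}, x_0` with no repeated vertices and no chords. -/
def IsInducedCycle (G : SimpleGraph V) (C : Set V) : Prop :=
  ∃ (n : ℕ) (f : ZMod n → V), 3 ≤ n ∧ Function.Injective f ∧ Set.range f = C ∧
    (∀ i, G.Adj (f i) (f (i + 1))) ∧
    ∀ i j, G.Adj (f i) (f j) → j = i + 1 ∨ i = j + 1

/-- `G` contains a cycle. -/
def HasCycle (G : SimpleGraph V) : Prop := ∃ C, IsInducedCycle G C

/-- `G` contains no cycle. -/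
def Acyclic (G : SimpleGraph V) : Prop := ¬HasCycle G

/-- `I` is a pre-cycle core of `G`: `G|_I` is connected and contains every cycle of `G`. -/
def IsPreCycleCore (G : SimpleGraph V) (I : Set V) : Prop :=
  ConnectedOn G I ∧ ∀ C, IsInducedCycle G C → C ⊆ I

/-- `K` is the cycle core of `G`: the unique minimal pre-cycle core. -/
def IsCycleCore (G : SimpleGraph V) (K : Set V) : Prop :=
  IsPreCycleCore G K ∧ ∀ I, IsPreCycleCore G I → K ⊆ I

/-- A walk is non-backtracking if no step immediately retraces the previous edge. -/
def IsNonBacktracking {G : SimpleGraph V} {u v : V} (w : G.Walk u v) : Prop :=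
  w.darts.Chain' fun d d' => d'.toProd.2 ≠ d.toProd.1

/-! ### Coxeter-theoretic preliminaries -/

variable {B W : Type*} [Group W] {M : CoxeterMatrix B}

/-- `m cs s t` is the order of `s t` in `W` (with the value `0` standing for infinite order). -/
noncomputable def m (cs : CoxeterSystem M W) (s t : B) : ℕ :=
  orderOf (cs.simple s * cs.simple t)

lemma orderOf_conj' {G : Type*} [Group G] (g x : G) : orderOf (g * x * g⁻¹) = orderOf x :=
  orderOf_injective (MulAut.conj g).toMonoidHom (MulAut.conj g).injective x

lemma m_symm (cs : CoxeterSystem M W) (s t : B) : m cs s t = m cs t s := by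
  unfold m
  have h : cs.simple t * cs.simple s
      = cs.simple t * (cs.simple s * cs.simple t) * (cs.simple t)⁻¹ := by group
  rw [h, orderOf_conj']

/-- `m(s,t)` is even (in particular finite). -/
def EvenM (cs : CoxeterSystem M W) (s t : B) : Prop :=
  m cs s t ≠ 0 ∧ Even (m cs s t)

/-- The standard parabolic subgroup `W_I`. -/
def parabolic (cs : CoxeterSystem M W) (I : Set B) : Subgroup W :=
  Subgroup.closure (cs.simple '' I)

/-- `r` is a reflection of the standard parabolic subgroup `W_I`,
i.e. a `W_I`-conjugate of a simple reflection indexed by `I`. -/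
def IsReflectionOf (cs : CoxeterSystem M W) (I : Set B) (r : W) : Prop :=
  ∃ w ∈ parabolic cs I, ∃ s ∈ I, r = w * cs.simple s * w⁻¹

/-- The subgroup `W_I^{⊥x}`, generated by the reflections of `W_I` other than `x` that
commute with `x`. -/
def perp (cs : CoxeterSystem M W) (I : Set B) (x : B) : Subgroup W :=
  Subgroup.closure {r | IsReflectionOf cs I r ∧ r ≠ cs.simple x ∧
    r * cs.simple x = cs.simple x * r}

/-- The odd Coxeter graph `Γ_I^odd`: vertices are the elements of `I`, and distinct
`s, t ∈ I` are adjacent iff `m(s,t)` is odd. -/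
def oddGraph (cs : CoxeterSystem M W) (I : Set B) : SimpleGraph B where
  Adj s t := s ≠ t ∧ s ∈ I ∧ t ∈ I ∧ Odd (m cs s t)
  symm := ⟨fun s t ⟨h1, h2, h3, h4⟩ => ⟨h1.symm, h3, h2, m_symm cs s t ▸ h4⟩⟩
  loopless := ⟨fun s h => h.1 rfl⟩

/-- `I_{∼x}^odd` : the vertex set of the connected component of `Γ_I^odd` containing `x`. -/
def oddComponent (cs : CoxeterSystem M W) (I : Set B) (x : B) : Set B :=
  {y | (oddGraph cs I).Reachable x y}

/-- The Coxeter graph of `K` is of type `Ã_{n-1}`: `K` admits a cyclic ordering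
`y_0, …, y_{n-1}` with `m(y_i, y_{i+1}) = 3` and `m(y_i, y_j) = 2` for all other
pairs of distinct indices. -/
def IsTypeATilde (cs : CoxeterSystem M W) (K : Set B) (n : ℕ) : Prop :=
  ∃ f : ZMod n → B, Function.Injective f ∧ Set.range f = K ∧
    (∀ i, m cs (f i) (f (i + 1)) = 3) ∧
    ∀ i j : ZMod n, j ≠ i → j ≠ i + 1 → i ≠ j + 1 → m cs (f i) (f j) = 2

/-- The Coxeter graph `Γ`: distinct `s, t` are adjacent iff `m(s,t) ≥ 3` (possibly infinite). -/
def coxGraph (cs : CoxeterSystem M W) : SimpleGraph B where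
  Adj s t := s ≠ t ∧ (m cs s t = 0 ∨ 3 ≤ m cs s t)
  symm := ⟨fun s t ⟨h1, h2⟩ => ⟨h1.symm, m_symm cs s t ▸ h2⟩⟩
  loopless := ⟨fun s h => h.1 rfl⟩

end CoxPerp


section AuxStatement0
open List SimpleGraph

variable {V : Type*} {G : SimpleGraph V} {I : Set V}


lemma getElem_congr_list {α : Type*} {l l' : List α} (h : l = l') {i : ℕ}
    (hi : i < l.length) : l[i] = l'[i]'(h ▸ hi) := by subst h; rfl

lemma getLast_congr_list {α : Type*} {l l' : List α} (h : l = l') (hne : l ≠ []) :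
    l.getLast hne = l'.getLast (h ▸ hne) := by subst h; rfl

lemma zmod_cast_val {n : ℕ} [NeZero n] (i : ZMod n) : ((i.val : ℕ) : ZMod n) = i := by
  simp [ZMod.natCast_val, ZMod.cast_id]

lemma chain'_getElem {α : Type*} {R : α → α → Prop} {l : List α} (h : l.Chain' R)
    (i : ℕ) (hi : i < l.length - 1) :
    R (l[i]'(by omega)) (l[i+1]'(by omega)) := by
  have := (List.isChain_iff_getElem.mp h) i (by omega)
  simpa using this

lemma chain'_of_getElem {α : Type*} {R : α → α → Prop} {l : List α}
    (h : ∀ (i : ℕ) (hi : i < l.length - 1), R (l[i]'(by omega)) (l[i+1]'(by omega))) :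
    l.Chain' R := by
  refine List.isChain_iff_getElem.mpr ?_
  intro i hi
  simpa using h i (by omega)

lemma adj_congr_idx {V : Type*} {G : SimpleGraph V} {L : List V} {a' b' : ℕ}
    {h1' : a' < L.length} {h2' : b' < L.length}
    (h : G.Adj (L[a']'h1') (L[b']'h2')) {a b : ℕ} (ha : a' = a) (hb : b' = b)
    {h1 : a < L.length} {h2 : b < L.length} : G.Adj (L[a]'h1) (L[b]'h2) := by
  subst ha; subst hb; exact h

lemma cyc_subset {V : Type*} {G : SimpleGraph V} {I : Set V}
    (hI2 : ∀ C, CoxPerp.IsInducedCycle G C → C ⊆ I) :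
    ∀ (n : ℕ) (L : List V), L.length = n → 3 ≤ L.length → L.Nodup →
      L.Chain' G.Adj → (∀ hne : L ≠ [], G.Adj (L.getLast hne) (L.head hne)) →
      ∀ v ∈ L, v ∈ I := by
  intro n
  induction n using Nat.strong_induction_on with
  | _ n IH =>
    intro L hLn h3 hnd hch hwrap v hv
    subst hLn
    have hne : L ≠ [] := by intro h; simp [h] at h3
    have hget : ∀ (i : ℕ) (hi : i < L.length - 1),
        G.Adj (L[i]'(by omega)) (L[i+1]'(by omega)) := chain'_getElem hch
    have hwrap' : G.Adj (L[L.length - 1]'(by omega)) (L[0]'(by omega)) := by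
      have := hwrap hne
      rwa [getLast_eq_getElem, head_eq_getElem] at this
    by_cases hc : ∃ (i j : ℕ) (hi : i < L.length) (hj : j < L.length), i < j ∧
        G.Adj L[i] L[j] ∧ j ≠ i + 1 ∧ ¬(i = 0 ∧ j = L.length - 1)
    · -- chord case: split into two smaller cycles
      obtain ⟨i, j, hi, hj, hij, hadj, hj1, hnotend⟩ := hc
      have hij2 : i + 2 ≤ j := by omega
      set L1 : List V := (L.drop i).take (j - i + 1) with hL1
      set L2 : List V := L.take (i+1) ++ L.drop j with hL2
      have hlen1 : L1.length = j - i + 1 := by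
        simp [hL1, length_take, length_drop]; omega
      have hlen2 : L2.length = (i+1) + (L.length - j) := by
        simp [hL2, length_take, length_drop]; omega
      have hget1 : ∀ (k : ℕ) (hk : k < L1.length), L1[k] = L[i+k]'(by rw [hlen1] at hk; omega) := by
        intro k hk
        simp [hL1, getElem_take, getElem_drop]
      have hget2 : ∀ (k : ℕ) (hk : k < L2.length),
          L2[k] = if h : k < i + 1 then L[k]'(by omega) else L[j + (k - (i+1))]'(by rw [hlen2] at hk; omega) := by
        intro k hk
        split
        · next h =>
          show (take (i+1) L ++ drop j L)[k]'hk = _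
          rw [getElem_append_left (by simp [length_take]; omega)]
          simp [getElem_take]
        · next h =>
          show (take (i+1) L ++ drop j L)[k]'hk = _
          rw [getElem_append_right (by simp [length_take]; omega)]
          simp only [getElem_drop]
          congr 1
          simp [length_take]
          omega
      have hmem1 : ∀ w ∈ L1, w ∈ I := by
        refine IH L1.length ?_ L1 rfl ?_ ?_ ?_ ?_
        · rw [hlen1]; omega
        · rw [hlen1]; omega
        · exact (((L.drop i).take_sublist _).trans (L.drop_sublist i)).nodup hnd
        · refine chain'_of_getElem ?_
          intro k hk
          rw [hget1 k (by omega), hget1 (k+1) (by omega)]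
          exact adj_congr_idx (hget (i+k) (by rw [hlen1] at hk; omega)) rfl (by omega)
        · intro hne1
          rw [getLast_eq_getElem, head_eq_getElem, hget1 _ (by omega),
            hget1 0 (by rw [hlen1]; omega)]
          exact adj_congr_idx hadj.symm (by rw [hlen1]; omega) (by omega)
      have hmem2 : ∀ w ∈ L2, w ∈ I := by
        refine IH L2.length ?_ L2 rfl ?_ ?_ ?_ ?_
        · rw [hlen2]; omega
        · rw [hlen2]; omega
        · refine Sublist.nodup ?_ hnd
          have hsub : L.take (i+1) ++ L.drop j <+ L.take (i+1) ++ L.drop (i+1) := by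
            rw [append_sublist_append_left]
            have : L.drop j = (L.drop (i+1)).drop (j - (i+1)) := by
              rw [drop_drop]; congr 1; omega
            rw [this]
            exact drop_sublist _ _
          simpa [take_append_drop] using hsub
        · refine chain'_of_getElem ?_
          intro k hk
          rw [hget2 k (by omega), hget2 (k+1) (by omega)]
          rw [hlen2] at hk
          rcases lt_trichotomy k i with h | h | h
          · rw [dif_pos (by omega), dif_pos (by omega)]
            exact hget k (by omega)
          · subst h
            rw [dif_pos (by omega), dif_neg (by omega)]
            exact adj_congr_idx hadj rfl (by omega)
          · rw [dif_neg (by omega), dif_neg (by omega)]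
            exact adj_congr_idx (hget (j + (k - (i+1))) (by omega)) rfl (by omega)
        · intro hne2
          rw [getLast_eq_getElem, head_eq_getElem, hget2 _ (by omega),
            hget2 0 (by rw [hlen2]; omega)]
          rw [dif_neg (by omega), dif_pos (by omega)]
          exact adj_congr_idx hwrap' (by omega) rfl
      obtain ⟨k, hk, rfl⟩ := mem_iff_getElem.mp hv
      rcases le_or_gt k i with h | h
      · refine hmem2 _ ?_
        have : L[k] = L2[k]'(by rw [hlen2]; omega) := by
          rw [hget2 k (by rw [hlen2]; omega), dif_pos (by omega)]
        rw [this]; exact getElem_mem _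
      rcases le_or_gt k j with h' | h'
      · refine hmem1 _ ?_
        have : L[k] = L1[k - i]'(by rw [hlen1]; omega) := by
          rw [hget1 _ (by rw [hlen1]; omega)]
          congr 1; omega
        rw [this]; exact getElem_mem _
      · refine hmem2 _ ?_
        have : L[k] = L2[(i+1) + (k - j)]'(by rw [hlen2]; omega) := by
          rw [hget2 _ (by rw [hlen2]; omega), dif_neg (by omega)]
          congr 1; omega
        rw [this]; exact getElem_mem _
    · -- chordless: L is an induced cycle
      push_neg at hc
      set N := L.length with hN
      haveI : NeZero N := ⟨by omega⟩
      set f : ZMod N → V := fun k => L[k.val]'(ZMod.val_lt k) with hf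
      have hfinj : Function.Injective f := by
        intro a b hab
        simp only [hf] at hab
        exact ZMod.val_injective N ((hnd.getElem_inj_iff).mp hab)
      have hrange : Set.range f = {w | w ∈ L} := by
        ext w
        constructor
        · rintro ⟨k, rfl⟩; exact getElem_mem _
        · intro hw
          obtain ⟨k, hk, rfl⟩ := mem_iff_getElem.mp hw
          refine ⟨(k : ZMod N), ?_⟩
          simp only [hf]
          congr 1
          exact ZMod.val_cast_of_lt hk
      have hstep : ∀ i : ZMod N, i + 1 = ((i.val + 1 : ℕ) : ZMod N) := by
        intro i
        rw [Nat.cast_add, Nat.cast_one, zmod_cast_val]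
      have hfadj : ∀ i : ZMod N, G.Adj (f i) (f (i+1)) := by
        intro i
        simp only [hf]
        rcases eq_or_lt_of_le (Nat.le_sub_one_of_lt (ZMod.val_lt i)) with hv1 | hv1
        · have hval0 : (i + 1).val = 0 := by
            rw [hstep i, ZMod.val_natCast,
              show i.val + 1 = N by omega, Nat.mod_self]
          exact adj_congr_idx hwrap' (by omega) hval0.symm
        · have hval1 : (i + 1).val = i.val + 1 := by
            rw [hstep i, ZMod.val_natCast, Nat.mod_eq_of_lt (by omega)]
          exact adj_congr_idx (hget i.val (by omega)) rfl hval1.symm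
      have hchord : ∀ i j : ZMod N, G.Adj (f i) (f j) → j = i + 1 ∨ i = j + 1 := by
        intro p q hpq
        simp only [hf] at hpq
        have hwrapeq : ((N - 1 : ℕ) : ZMod N) + 1 = 0 := by
          rw [show ((N - 1 : ℕ) : ZMod N) + 1 = ((N - 1 + 1 : ℕ) : ZMod N) by
            rw [Nat.cast_add, Nat.cast_one], show N - 1 + 1 = N by omega,
            ZMod.natCast_self]
        rcases lt_trichotomy p.val q.val with h | h | h
        · by_cases h1 : q.val = p.val + 1
          · left
            rw [← zmod_cast_val q, ← zmod_cast_val p, h1, Nat.cast_add, Nat.cast_one]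
          · obtain ⟨h0, hn1⟩ := hc p.val q.val (ZMod.val_lt p) (ZMod.val_lt q) h hpq h1
            right
            rw [← zmod_cast_val p, ← zmod_cast_val q, h0, hn1, hwrapeq]
            simp
        · exact absurd hpq (by
            have : p = q := ZMod.val_injective N h
            subst this
            exact G.loopless.irrefl _)
        · by_cases h1 : p.val = q.val + 1
          · right
            rw [← zmod_cast_val p, ← zmod_cast_val q, h1, Nat.cast_add, Nat.cast_one]
          · obtain ⟨h0, hn1⟩ := hc q.val p.val (ZMod.val_lt q) (ZMod.val_lt p) h hpq.symm h1
            left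
            rw [← zmod_cast_val q, ← zmod_cast_val p, h0, hn1, hwrapeq]
            simp
      exact hI2 _ ⟨N, f, by omega, hfinj, hrange, hfadj, hchord⟩ hv

lemma cyc_subset_zmod (hI2 : ∀ C, CoxPerp.IsInducedCycle G C → C ⊆ I)
    (n : ℕ) (f : ZMod n → V) (h3 : 3 ≤ n) (hinj : Function.Injective f)
    (hadj : ∀ i, G.Adj (f i) (f (i+1))) : ∀ i, f i ∈ I := by
  haveI : NeZero n := ⟨by omega⟩
  set L := List.ofFn (fun k : Fin n => f ((k.val : ℕ) : ZMod n)) with hLdef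
  have hlen : L.length = n := by simp [hLdef]
  have hget : ∀ (k : ℕ) (hk : k < L.length), L[k] = f ((k : ℕ) : ZMod n) := by
    intro k hk; simp [hLdef, List.getElem_ofFn]
  have hmem : ∀ v ∈ L, v ∈ I := by
    refine cyc_subset hI2 L.length L rfl (by omega) ?_ ?_ ?_
    · rw [hLdef, List.nodup_ofFn]
      intro a b hab
      have h1 := congrArg ZMod.val (hinj hab)
      rw [ZMod.val_cast_of_lt a.isLt, ZMod.val_cast_of_lt b.isLt] at h1
      exact Fin.ext h1
    · refine chain'_of_getElem ?_
      intro k hk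
      rw [hget k (by omega), hget (k+1) (by omega), Nat.cast_add, Nat.cast_one]
      exact hadj _
    · intro hne
      rw [List.getLast_eq_getElem, List.head_eq_getElem, hget _ (by omega),
        hget 0 (by omega)]
      have e1 : ((0:ℕ) : ZMod n) = ((L.length - 1 : ℕ) : ZMod n) + 1 := by
        rw [show ((L.length-1:ℕ):ZMod n) + 1 = ((L.length-1+1 : ℕ) : ZMod n) by
            rw [Nat.cast_add, Nat.cast_one],
          show L.length - 1 + 1 = n by omega, ZMod.natCast_self, Nat.cast_zero]
      rw [e1]
      exact hadj _
  intro i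
  have : f i = L[i.val]'(by rw [hlen]; exact ZMod.val_lt i) := by
    rw [hget i.val (by rw [hlen]; exact ZMod.val_lt i), zmod_cast_val]
  rw [this]; exact hmem _ (List.getElem_mem _)

lemma restrict_le (G : SimpleGraph V) (I : Set V) : CoxPerp.Restrict G I ≤ G :=
  fun _ _ h => (show _ ∧ _ ∧ _ from h).2.2

lemma support_getLast' {u v : V} : ∀ (w : G.Walk u v) (h : w.support ≠ []),
    w.support.getLast h = v := by
  intro w
  induction w with
  | nil => intro h; simp
  | cons hadj p ih =>
    intro h
    rw [getLast_congr_list (Walk.support_cons hadj p), List.getLast_cons p.support_ne_nil]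
    exact ih _

lemma support_restrict_mem {J : Set V} : ∀ {u v : V} (w : (CoxPerp.Restrict G J).Walk u v),
    u ∈ J → ∀ x ∈ w.support, x ∈ J := by
  intro u v w
  induction w with
  | nil => intro hu x hx; simp at hx; subst hx; exact hu
  | cons h p ih =>
    intro hu x hx
    rw [Walk.support_cons, List.mem_cons] at hx
    rcases hx with rfl | hx
    · exact hu
    · exact ih (show _ ∧ _ ∧ _ from h).2.1 x hx

lemma reachable_restrict_of_walk {J : Set V} : ∀ {u v : V} (w : G.Walk u v),
    (∀ x ∈ w.support, x ∈ J) → (CoxPerp.Restrict G J).Reachable u v := by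
  intro u v w
  induction w with
  | nil => intro _; exact Reachable.refl _
  | cons h p ih =>
    intro hs
    refine (SimpleGraph.Adj.reachable ?_).trans (ih fun x hx => hs x (by simp [hx]))
    show _ ∧ _ ∧ _; exact ⟨hs _ (Walk.start_mem_support _), hs _ (by simp [Walk.support_cons, p.start_mem_support]), h⟩

lemma exists_attach : ∀ {s z : V} (w : G.Walk s z), z ∈ I →
    ∃ x, x ∈ I ∧ ∃ p : G.Walk s x, ∀ v ∈ p.support, v ∈ I → v = x := by
  classical
  intro s z w
  induction w with
  | nil => intro hz; exact ⟨_, hz, Walk.nil, by simp⟩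
  | @cons u b z h p ih =>
    intro hz
    by_cases hu : u ∈ I
    · exact ⟨u, hu, Walk.nil, by simp⟩
    · obtain ⟨x, hx, q, hq⟩ := ih hz
      refine ⟨x, hx, Walk.cons h q, ?_⟩
      intro v hv hvI
      rw [Walk.support_cons, List.mem_cons] at hv
      rcases hv with rfl | hv
      · exact absurd hvI hu
      · exact hq v hv hvI

lemma unique_attach (hI : CoxPerp.IsPreCycleCore G I) :
    ∀ (n : ℕ) (s x y : V) (p : G.Walk s x) (q : G.Walk s y),
      p.length + q.length = n → p.IsPath → q.IsPath → x ∈ I → y ∈ I →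
      (∀ v ∈ p.support, v ∈ I → v = x) → (∀ v ∈ q.support, v ∈ I → v = y) →
      x = y := by
  classical
  intro n
  induction n using Nat.strong_induction_on with
  | _ n IH =>
    intro s x y p q hlen hp hq hx hy hpI hqI
    by_contra hxy
    have hsI : s ∉ I := fun hs =>
      hxy (by rw [← hpI s p.start_mem_support hs, ← hqI s q.start_mem_support hs])
    by_cases hshare : ∃ t, t ∈ p.support ∧ t ∈ q.support ∧ t ≠ s
    · obtain ⟨t, ht1, ht2, hts⟩ := hshare
      have hlt : (p.dropUntil t ht1).length + (q.dropUntil t ht2).length < n := by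
        have e1 := congrArg Walk.length (p.take_spec ht1)
        have e2 := congrArg Walk.length (q.take_spec ht2)
        rw [Walk.length_append] at e1 e2
        have h1 : (p.takeUntil t ht1).length ≠ 0 := fun h0 =>
          hts (Walk.eq_of_length_eq_zero h0).symm
        omega
      exact hxy (IH _ hlt t x y (p.dropUntil t ht1) (q.dropUntil t ht2) rfl
        (hp.dropUntil ht1) (hq.dropUntil ht2) hx hy
        (fun v hv => hpI v (p.support_dropUntil_subset ht1 hv))
        (fun v hv => hqI v (q.support_dropUntil_subset ht2 hv)))
    · push_neg at hshare
      obtain ⟨R0⟩ := hI.1.2 y hy x hx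
      have hR1path : (R0.toPath.1 : (CoxPerp.Restrict G I).Walk y x).IsPath := R0.toPath.2
      set R1 : (CoxPerp.Restrict G I).Walk y x := R0.toPath.1 with hR1def
      set R : G.Walk y x := R1.mapLe (restrict_le G I) with hRdef
      have hRsupp : R.support = R1.support := by
        rw [hRdef]
        unfold Walk.mapLe
        rw [Walk.support_map]
        exact List.map_id _
      have hRnodup : R.support.Nodup := hRsupp ▸ hR1path.support_nodup
      have hRI : ∀ w ∈ R.support, w ∈ I := by
        rw [hRsupp]; exact support_restrict_mem R1 hy
      have hRlen : 1 ≤ R.length := by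
        rcases Nat.eq_zero_or_pos R.length with h0 | h0
        · exact absurd (Walk.eq_of_length_eq_zero h0).symm hxy
        · omega
      have hplen : 1 ≤ p.length := by
        rcases Nat.eq_zero_or_pos p.length with h0 | h0
        · exact absurd ((Walk.eq_of_length_eq_zero h0) ▸ hx) hsI
        · omega
      have hqlen : 1 ≤ q.length := by
        rcases Nat.eq_zero_or_pos q.length with h0 | h0
        · exact absurd ((Walk.eq_of_length_eq_zero h0) ▸ hy) hsI
        · omega
      set W : G.Walk x x := (p.reverse.append q).append R with hWdef
      have hWsupp : W.support = (p.reverse.support ++ q.support.tail) ++ R.support.tail := by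
        rw [hWdef, Walk.support_append, Walk.support_append]
      have hWlen : W.length = p.length + q.length + R.length := by
        rw [hWdef, Walk.length_append, Walk.length_append, Walk.length_reverse]
      have hRt_ne : R.support.tail ≠ [] := by
        intro h0
        have := congrArg List.length h0
        rw [List.length_tail, Walk.length_support] at this
        simp only [List.length_nil] at this
        omega
      have hL : W.support.dropLast = (p.reverse.support ++ q.support.tail) ++ R.support.tail.dropLast := by
        rw [hWsupp, List.dropLast_append_of_ne_nil hRt_ne]
      have hLlen : W.support.dropLast.length = p.length + q.length + R.length := by
        rw [List.length_dropLast, Walk.length_support, hWlen]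
        omega
      have h3L : 3 ≤ W.support.dropLast.length := by omega
      -- nodup
      have hqtail_nodup : q.support.tail.Nodup :=
        (List.tail_sublist q.support).nodup hq.support_nodup
      have hqs_tail : s ∉ q.support.tail := by
        have hnd := hq.support_nodup
        rw [q.support_eq_cons] at hnd
        exact (List.nodup_cons.mp hnd).1
      have hdisj1 : List.Disjoint p.reverse.support q.support.tail := by
        intro w w1 w2
        rw [Walk.support_reverse, List.mem_reverse] at w1
        have hws := hshare w w1 (List.mem_of_mem_tail w2)
        subst hws
        exact hqs_tail w2
      have hRy : y ∉ R.support.tail := by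
        have hnd := hRnodup
        rw [R.support_eq_cons] at hnd
        exact (List.nodup_cons.mp hnd).1
      have hRt_nodup : R.support.tail.Nodup := (List.tail_sublist _).nodup hRnodup
      have hRt_last : R.support.tail.getLast hRt_ne = x := by
        have h0 : R.support.getLast (R.support_ne_nil) = x := support_getLast' R _
        rw [getLast_congr_list (R.support_eq_cons), List.getLast_cons hRt_ne] at h0
        exact h0
      have hRx : x ∉ R.support.tail.dropLast := by
        intro hx'
        have e := List.dropLast_append_getLast hRt_ne
        rw [hRt_last] at e
        have hnd2 := hRt_nodup
        rw [← e, List.nodup_append] at hnd2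
        exact hnd2.2.2 x hx' x (by simp) rfl
      have hRint_I : ∀ w ∈ R.support.tail.dropLast, w ∈ I := fun w hw =>
        hRI w (List.mem_of_mem_tail ((List.dropLast_sublist _).subset hw))
      have hRint_mem : ∀ w ∈ R.support.tail.dropLast, w ∈ R.support.tail :=
        fun w hw => (List.dropLast_sublist _).subset hw
      have hLnodup : W.support.dropLast.Nodup := by
        rw [hL, List.nodup_append]
        refine ⟨?_, ?_, ?_⟩
        · rw [List.nodup_append]
          exact ⟨hp.reverse.support_nodup, hqtail_nodup, fun a ha b hb hab => hdisj1 ha (hab ▸ hb)⟩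
        · exact (List.dropLast_sublist _).nodup hRt_nodup
        · intro w w1 w' w2 hww
          subst hww
          have hwI : w ∈ I := hRint_I w w2
          rw [List.mem_append] at w1
          rcases w1 with w1 | w1
          · rw [Walk.support_reverse, List.mem_reverse] at w1
            have hwx : w = x := hpI w w1 hwI
            subst hwx
            exact hRx w2
          · have hwy : w = y := hqI w (List.mem_of_mem_tail w1) hwI
            subst hwy
            exact hRy (hRint_mem _ w2)
      have hchain : W.support.dropLast.Chain' G.Adj :=
        (W.isChain_adj_support).prefix (List.dropLast_prefix _)
      have hM : W.support.length = W.length + 1 := Walk.length_support W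
      have hwrapL : ∀ hne : W.support.dropLast ≠ [],
          G.Adj (W.support.dropLast.getLast hne) (W.support.dropLast.head hne) := by
        intro hne
        have e0 : W.support[0]'(by omega) = x := by
          rw [getElem_congr_list (W.support_eq_cons)]
          simp
        have eLast : W.support[W.support.length - 1]'(by omega) = x := by
          have h0 := support_getLast' W W.support_ne_nil
          rwa [List.getLast_eq_getElem] at h0
        have hadj2 : G.Adj
            (W.support[W.support.dropLast.length - 1]'(by rw [List.length_dropLast]; omega))
            (W.support[W.support.length - 1]'(by omega)) :=
          adj_congr_idx (chain'_getElem W.isChain_adj_support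
            (W.support.dropLast.length - 1) (by rw [List.length_dropLast]; omega))
            rfl (by rw [List.length_dropLast]; omega)
        rw [eLast] at hadj2
        rw [List.getLast_eq_getElem, List.head_eq_getElem, List.getElem_dropLast,
          List.getElem_dropLast, e0]
        exact hadj2
      have hsmem : s ∈ W.support.dropLast := by
        rw [hL]
        refine List.mem_append_left _ (List.mem_append_left _ ?_)
        rw [Walk.support_reverse, List.mem_reverse]
        exact p.start_mem_support
      exact hsI (cyc_subset hI.2 _ _ rfl h3L hLnodup hchain hwrapL s hsmem)

end AuxStatement0

open SimpleGraph List in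
open CoxPerp in
/-- decomposition of a connected graph associated to a pre-cycle core. -/
theorem statement_0 {V : Type*} (G : SimpleGraph V) (I : Set V)
    (hG : G.Connected) (hI : IsPreCycleCore G I) :
    ∃ h : V → V,
      (∀ s, h s ∈ I ∧ ∃ p : G.Walk s (h s), ∀ v ∈ p.support, v ∈ I → v = h s) ∧
      (∀ s, ∀ x ∈ I, (∃ p : G.Walk s x, ∀ v ∈ p.support, v ∈ I → v = x) → x = h s) ∧
      (∀ x ∈ I, ∀ y ∈ I, x ≠ y → Disjoint {s | h s = x} {s | h s = y}) ∧
      (⋃ x ∈ I, {s | h s = x}) = Set.univ ∧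
      (∀ x ∈ I, {s | h s = x} ∩ I = {x}) ∧
      (∀ x ∈ I, ConnectedOn G {s | h s = x} ∧ Acyclic (Restrict G {s | h s = x})) ∧
      (∀ u v, G.Adj u v → (u ∈ I ∧ v ∈ I) ∨ h u = h v) := by
  
  classical
  have hEx : ∀ s : V, ∃ x, x ∈ I ∧ ∃ p : G.Walk s x, ∀ v ∈ p.support, v ∈ I → v = x := by
    intro s
    obtain ⟨z, hz⟩ := hI.1.1
    obtain ⟨w⟩ := hG.preconnected s z
    exact exists_attach w hz
  set h : V → V := fun s => (hEx s).choose with hhdef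
  have hmem : ∀ s, h s ∈ I := fun s => (hEx s).choose_spec.1
  have hwalk : ∀ s, ∃ p : G.Walk s (h s), ∀ v ∈ p.support, v ∈ I → v = h s :=
    fun s => (hEx s).choose_spec.2
  have huniq : ∀ s x, x ∈ I → (∃ p : G.Walk s x, ∀ v ∈ p.support, v ∈ I → v = x) → x = h s := by
    rintro s x hx ⟨p, hpI⟩
    obtain ⟨p', hpI'⟩ := hwalk s
    exact unique_attach hI _ s x (h s) p.toPath.1 p'.toPath.1 rfl p.toPath.2 p'.toPath.2
      hx (hmem s)
      (fun v hv => hpI v (Walk.support_toPath_subset p hv))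
      (fun v hv => hpI' v (Walk.support_toPath_subset p' hv))
  have hfix : ∀ x ∈ I, h x = x :=
    fun x hx => (huniq x x hx ⟨Walk.nil, by simp⟩).symm
  have hJwalk : ∀ s, ∃ p : G.Walk s (h s), ∀ v ∈ p.support, h v = h s := by
    intro s
    obtain ⟨p, hpI⟩ := hwalk s
    refine ⟨p, fun v hv => ?_⟩
    exact (huniq v (h s) (hmem s) ⟨p.dropUntil v hv,
      fun w hw hwI => hpI w (p.support_dropUntil_subset hv hw) hwI⟩).symm
  refine ⟨h, fun s => ⟨hmem s, hwalk s⟩, fun s x hx hex => huniq s x hx hex, ?_, ?_, ?_, ?_, ?_⟩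
  · intro x hx y hy hxy
    rw [Set.disjoint_left]
    intro s hs1 hs2
    exact hxy ((hs1 : h s = x).symm.trans (hs2 : h s = y))
  · ext s
    simp only [Set.mem_iUnion, Set.mem_setOf_eq, Set.mem_univ, iff_true]
    exact ⟨h s, hmem s, rfl⟩
  · intro x hx
    ext s
    simp only [Set.mem_inter_iff, Set.mem_setOf_eq, Set.mem_singleton_iff]
    constructor
    · rintro ⟨hs1, hs2⟩
      rw [← hfix s hs2]
      exact hs1
    · rintro rfl
      exact ⟨hfix _ hx, hx⟩
  · intro x hx
    constructor
    · refine ⟨Set.nonempty_of_mem (hfix x hx), ?_⟩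
      have hreach : ∀ u ∈ {s | h s = x}, (Restrict G {s | h s = x}).Reachable u x := by
        intro u hu
        obtain ⟨p, hp⟩ := hJwalk u
        have hr : (Restrict G {s | h s = x}).Reachable u (h u) :=
          reachable_restrict_of_walk p (fun w hw => by
            rw [Set.mem_setOf_eq, hp w hw]; exact hu)
        rwa [show h u = x from hu] at hr
      intro u hu v hv
      exact (hreach u hu).trans (hreach v hv).symm
    · rintro ⟨C, m, f, h3m, hinj, hrange, hadj, hchord⟩
      haveI : NeZero m := ⟨by omega⟩
      have hfI : ∀ i, f i ∈ I := cyc_subset_zmod hI.2 m f h3m hinj (fun i => (show _ ∧ _ ∧ _ from hadj i).2.2)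
      have hfJ : ∀ i : ZMod m, h (f i) = x := fun i => (show _ ∧ _ ∧ _ from hadj i).1
      have hfx : ∀ i : ZMod m, f i = x :=
        fun i => ((hfix _ (hfI i)).symm).trans (hfJ i)
      have h01 : (0 : ZMod m) = 1 := hinj ((hfx 0).trans (hfx 1).symm)
      haveI : Fact (1 < m) := ⟨by omega⟩
      have := congrArg ZMod.val h01
      rw [ZMod.val_zero, ZMod.val_one] at this
      omega
  · intro u v huv
    by_cases hu : u ∈ I <;> by_cases hv : v ∈ I
    · exact Or.inl ⟨hu, hv⟩
    · right
      have h1 : u = h v := huniq v u hu ⟨Walk.cons huv.symm Walk.nil, by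
        intro w hw hwI
        simp only [Walk.support_cons, Walk.support_nil, List.mem_cons, List.mem_singleton] at hw
        rcases hw with rfl | rfl | hnil
        · exact absurd hwI hv
        · rfl
        · exact absurd hnil List.not_mem_nil⟩
      rw [hfix u hu, h1]
    · right
      have h1 : v = h u := huniq u v hv ⟨Walk.cons huv Walk.nil, by
        intro w hw hwI
        simp only [Walk.support_cons, Walk.support_nil, List.mem_cons, List.mem_singleton] at hw
        rcases hw with rfl | rfl | hnil
        · exact absurd hwI hu
        · rfl
        · exact absurd hnil List.not_mem_nil⟩
      rw [hfix v hv, ← h1]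
    · right
      obtain ⟨p, hp⟩ := hwalk v
      refine ((huniq u (h v) (hmem v) ⟨Walk.cons huv p, ?_⟩)).symm
      intro w hw hwI
      rw [Walk.support_cons, List.mem_cons] at hw
      rcases hw with rfl | hw
      · exact absurd hwI hu
      · exact hp w hw hwI
end

section
/- Let G be a connected simple graph and I ⊆ V(G) a pre-cycle core of G. Then for any y, z ∈ I, every non-backtracking walk in G between y and z has all of its vertices in I, i.e. is contained in the induced subgraph G|_I. -/
section Stmt1Aux
open SimpleGraph Walk

variable {V : Type*} {G : SimpleGraph V}

private lemma zmod_val_cast {n : ℕ} [NeZero n] (a : ZMod n) : ((a.val : ℕ) : ZMod n) = a := by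
  rw [ZMod.natCast_val, ZMod.cast_id]

private lemma zmod_add_one_val {n : ℕ} (hn : 3 ≤ n) (m : ZMod n) (h : m.val + 1 < n) :
    (m + 1).val = m.val + 1 := by
  haveI : NeZero n := ⟨by omega⟩
  haveI : Fact (1 < n) := ⟨by omega⟩
  rw [ZMod.val_add, ZMod.val_one, Nat.mod_eq_of_lt h]

private lemma zmod_add_one_eq_zero {n : ℕ} (hn : 3 ≤ n) (m : ZMod n) (h : m.val + 1 = n) :
    m + 1 = 0 := by
  haveI : NeZero n := ⟨by omega⟩
  haveI : Fact (1 < n) := ⟨by omega⟩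
  have h0 : (m + 1).val = 0 := by rw [ZMod.val_add, ZMod.val_one, h, Nat.mod_self]
  exact (ZMod.val_eq_zero _).mp h0

/-- From a cyclic sequence of adjacent vertices, extract a chordless cycle through
any given vertex of the sequence. -/
private lemma cycSeq_to_induced :
    ∀ n (f : ZMod n → V), 3 ≤ n → Function.Injective f → (∀ i, G.Adj (f i) (f (i + 1))) →
      ∀ v, (∃ i, f i = v) →
      ∃ C, CoxPerp.IsInducedCycle G C ∧ v ∈ C := by
  intro n
  induction n using Nat.strong_induction_on with
  | _ n ih =>
  intro f hn hinj hadj v hv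
  haveI : NeZero n := ⟨by omega⟩
  by_cases hc : ∀ i j, G.Adj (f i) (f j) → j = i + 1 ∨ i = j + 1
  · obtain ⟨i, hi⟩ := hv
    exact ⟨Set.range f, ⟨n, f, hn, hinj, rfl, hadj, hc⟩, ⟨i, hi⟩⟩
  push_neg at hc
  obtain ⟨i, j, hij, hj1, hi1⟩ := hc
  set g : ZMod n → V := fun k => f (k + i) with hg
  have hginj : Function.Injective g := fun a b hab => add_right_cancel (hinj hab)
  have hgadj : ∀ k, G.Adj (g k) (g (k + 1)) := by
    intro k
    have h1 : k + 1 + i = (k + i) + 1 := by ring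
    simp only [hg, h1]
    exact hadj _
  have hine : i ≠ j := by rintro rfl; exact G.loopless.irrefl _ hij
  set d := (j - i).val with hd
  have hdn : d < n := ZMod.val_lt _
  have hdcast : ((d : ℕ) : ZMod n) = j - i := by rw [hd, zmod_val_cast]
  have hchord : G.Adj (g 0) (g ((d : ℕ) : ZMod n)) := by
    have h2 : j - i + i = j := by ring
    simp only [hg, zero_add, hdcast, h2]
    exact hij
  have hd0 : d ≠ 0 := fun h0 =>
    hine (sub_eq_zero.mp ((ZMod.val_eq_zero _).mp h0)).symm
  have hd1 : d ≠ 1 := by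
    intro h1
    have : j - i = 1 := by rw [← hdcast, h1, Nat.cast_one]
    exact hj1 (by rw [← this]; ring)
  have hdn1 : d ≠ n - 1 := by
    intro h1
    have hcast : ((d : ℕ) : ZMod n) = -1 := by
      rw [h1, Nat.cast_sub (by omega : 1 ≤ n), ZMod.natCast_self, Nat.cast_one, zero_sub]
    have : j - i = -1 := by rw [← hdcast, hcast]
    refine hi1 ?_
    have h2 : i - j = 1 := by rw [← neg_sub, this, neg_neg]
    rw [sub_eq_iff_eq_add] at h2
    rw [h2]; ring
  have hd2 : 2 ≤ d := by omega
  have hdle : d ≤ n - 2 := by omega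
  -- the index of v in the rotated sequence
  obtain ⟨k₀, hk₀⟩ := hv
  set k := (k₀ - i).val with hk
  have hkn : k < n := ZMod.val_lt _
  have hkv : g ((k : ℕ) : ZMod n) = v := by
    have : ((k : ℕ) : ZMod n) = k₀ - i := by rw [hk, zmod_val_cast]
    rw [this]
    show f (k₀ - i + i) = v
    rw [sub_add_cancel, hk₀]
  by_cases hkd : k ≤ d
  · -- first subcycle: g 0, g 1, ..., g d
    set n₁ := d + 1 with hn₁
    haveI : NeZero n₁ := ⟨by omega⟩
    have hn₁3 : 3 ≤ n₁ := by omega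
    have hn₁lt : n₁ < n := by omega
    set f₁ : ZMod n₁ → V := fun m => g ((m.val : ℕ) : ZMod n) with hf₁
    have hvlt : ∀ m : ZMod n₁, m.val < n := fun m => lt_trans (ZMod.val_lt m) hn₁lt
    have hf₁inj : Function.Injective f₁ := by
      intro a b hab
      have h2 : ((a.val : ℕ) : ZMod n) = ((b.val : ℕ) : ZMod n) := hginj hab
      have h3 := (ZMod.natCast_eq_natCast_iff _ _ _).mp h2
      have h4 : a.val % n = b.val % n := h3
      rw [Nat.mod_eq_of_lt (hvlt a), Nat.mod_eq_of_lt (hvlt b)] at h4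
      exact ZMod.val_injective _ h4
    have hf₁adj : ∀ m, G.Adj (f₁ m) (f₁ (m + 1)) := by
      intro m
      have hmlt : m.val < n₁ := ZMod.val_lt m
      by_cases hme : m.val + 1 = n₁
      · have hm0 : m + 1 = 0 := zmod_add_one_eq_zero hn₁3 m hme
        have hmd : m.val = d := by omega
        rw [hm0]
        simp only [hf₁, ZMod.val_zero, Nat.cast_zero, hmd]
        exact hchord.symm
      · have hv1 : (m + 1).val = m.val + 1 := zmod_add_one_val hn₁3 m (by omega)
        simp only [hf₁, hv1]
        have hcast2 : ((m.val + 1 : ℕ) : ZMod n) = ((m.val : ℕ) : ZMod n) + 1 := by push_cast; ring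
        rw [hcast2]
        exact hgadj _
    have hvr : f₁ ((k : ℕ) : ZMod n₁) = v := by
      have hval : ((k : ℕ) : ZMod n₁).val = k := ZMod.val_cast_of_lt (by omega)
      simp only [hf₁, hval, hkv]
    exact ih n₁ hn₁lt f₁ hn₁3 hf₁inj hf₁adj v ⟨_, hvr⟩
  · -- second subcycle: g d, g (d+1), ..., g (n-1), g 0
    set e := n - d with he
    set n₂ := e + 1 with hn₂
    haveI : NeZero n₂ := ⟨by omega⟩
    have hn₂3 : 3 ≤ n₂ := by omega
    have hn₂lt : n₂ < n := by omega
    set f₂ : ZMod n₂ → V := fun m => g ((d + m.val : ℕ) : ZMod n) with hf₂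
    have hvle : ∀ m : ZMod n₂, m.val ≤ e := fun m => by
      have := ZMod.val_lt m; omega
    have hf₂inj : Function.Injective f₂ := by
      intro a b hab
      have h2 : ((d + a.val : ℕ) : ZMod n) = ((d + b.val : ℕ) : ZMod n) := hginj hab
      have h3 : (d + a.val) % n = (d + b.val) % n := (ZMod.natCast_eq_natCast_iff _ _ _).mp h2
      have ha := hvle a
      have hb := hvle b
      have hax : d + a.val ≤ n := by omega
      have hbx : d + b.val ≤ n := by omega
      have hval : a.val = b.val := by
        rcases eq_or_lt_of_le hax with h | h <;> rcases eq_or_lt_of_le hbx with h' | h'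
        · omega
        · rw [h, Nat.mod_self, Nat.mod_eq_of_lt h'] at h3; omega
        · rw [h', Nat.mod_self, Nat.mod_eq_of_lt h] at h3; omega
        · rw [Nat.mod_eq_of_lt h, Nat.mod_eq_of_lt h'] at h3; omega
      exact ZMod.val_injective _ hval
    have hf₂adj : ∀ m, G.Adj (f₂ m) (f₂ (m + 1)) := by
      intro m
      have hmlt : m.val < n₂ := ZMod.val_lt m
      by_cases hme : m.val + 1 = n₂
      · have hm0 : m + 1 = 0 := zmod_add_one_eq_zero hn₂3 m hme
        have hmd : m.val = e := by omega
        rw [hm0]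
        have h1 : f₂ m = g 0 := by
          simp only [hf₂, hmd]
          congr 1
          have : (d + e : ℕ) = n := by omega
          rw [this, ZMod.natCast_self]
        have h2 : f₂ 0 = g ((d : ℕ) : ZMod n) := by
          simp only [hf₂, ZMod.val_zero, Nat.add_zero]
        rw [h1, h2]
        exact hchord
      · have hv1 : (m + 1).val = m.val + 1 := zmod_add_one_val hn₂3 m (by omega)
        simp only [hf₂, hv1]
        have hcast2 : ((d + (m.val + 1) : ℕ) : ZMod n) = ((d + m.val : ℕ) : ZMod n) + 1 := by
          push_cast; ring
        rw [hcast2]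
        exact hgadj _
    have hvr : f₂ ((k - d : ℕ) : ZMod n₂) = v := by
      have hval : ((k - d : ℕ) : ZMod n₂).val = k - d := ZMod.val_cast_of_lt (by omega)
      simp only [hf₂, hval]
      have : (d + (k - d) : ℕ) = k := by omega
      rw [this, hkv]
    exact ih n₂ hn₂lt f₂ hn₂3 hf₂inj hf₂adj v ⟨_, hvr⟩

private lemma darts_get_toProd : ∀ {u v : V} (p : G.Walk u v) (t : ℕ) (h : t < p.darts.length),
    (p.darts.get ⟨t, h⟩).toProd = (p.getVert t, p.getVert (t + 1))
  | _, _, .nil, t, h => by simp at h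
  | _, _, .cons ha q, 0, h => by simp
  | u, v, .cons ha q, t + 1, h => by
    have := darts_get_toProd q t (by simpa using h)
    simpa using this

private lemma nb_getVert {u v : V} {p : G.Walk u v} (hp : CoxPerp.IsNonBacktracking p)
    {t : ℕ} (ht : t + 2 ≤ p.length) : p.getVert (t + 2) ≠ p.getVert t := by
  have hlen : p.darts.length = p.length := p.length_darts
  have h := List.isChain_iff_getElem.mp hp t (by omega)
  have e1 := darts_get_toProd p t (by omega)
  have e2 := darts_get_toProd p (t + 1) (by omega)
  intro heq
  apply h
  change (p.darts.get ⟨t + 1, by omega⟩).toProd.2 = (p.darts.get ⟨t, by omega⟩).toProd.1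
  have h2 : (p.darts.get ⟨t + 1, by omega⟩).toProd.2 = p.getVert (t + 2) := by rw [e2]
  have h1 : (p.darts.get ⟨t, by omega⟩).toProd.1 = p.getVert t := by rw [e1]
  rw [h2, h1, heq]

private lemma exists_split : ∀ {u w : V} (p : G.Walk u w) (k : ℕ), k ≤ p.length →
    ∃ (q : G.Walk u (p.getVert k)) (r : G.Walk (p.getVert k) w),
      p = q.append r ∧ q.length = k
  | _, _, .nil, k, hk => by
    have : k = 0 := by simpa using hk
    subst this
    exact ⟨.nil, .nil, rfl, rfl⟩
  | u, w, .cons ha q', 0, hk => ⟨.nil, .cons ha q', rfl, rfl⟩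
  | u, w, .cons ha q', k + 1, hk => by
    obtain ⟨q₁, r₁, heq, hlen⟩ := exists_split q' k (by simpa using hk)
    exact ⟨.cons ha q₁, r₁, by show Walk.cons ha q' = Walk.cons ha (q₁.append r₁); exact congrArg _ heq, by simp [hlen]⟩

private lemma support_get : ∀ {u w : V} (p : G.Walk u w) (t : ℕ) (h : t < p.support.length),
    p.support.get ⟨t, h⟩ = p.getVert t
  | _, _, .nil, 0, h => rfl
  | _, _, .nil, t + 1, h => by simp at h
  | u, w, .cons ha q, 0, h => rfl
  | u, w, .cons ha q, t + 1, h => by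
    have := support_get q t (by simpa using h)
    simpa using this

private lemma isPath_getVert_inj {u w : V} {p : G.Walk u w} (hp : p.IsPath)
    {a b : ℕ} (ha : a ≤ p.length) (hb : b ≤ p.length) (h : p.getVert a = p.getVert b) :
    a = b := by
  have hnd := hp.support_nodup
  have hl := p.length_support
  have ha' : a < p.support.length := by omega
  have hb' : b < p.support.length := by omega
  have h2 : p.support.get ⟨a, ha'⟩ = p.support.get ⟨b, hb'⟩ := by
    rw [support_get p a ha', support_get p b hb', h]
  have := (List.Nodup.get_inj_iff hnd).mp h2
  exact congrArg Fin.val this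

private lemma restrict_support_mem {I : Set V} : ∀ {a b : V}
    (q : (CoxPerp.Restrict G I).Walk a b), a ∈ I → ∀ w ∈ q.support, w ∈ I
  | _, _, .nil, ha, w, hw => by
    rw [Walk.support_nil] at hw; simp at hw; rwa [hw]
  | a, b, .cons hadj q, ha, w, hw => by
    rw [Walk.support_cons] at hw
    rcases List.mem_cons.mp hw with h | h
    · rwa [h]
    · exact restrict_support_mem q (show _ ∧ _ ∧ _ from hadj).2.1 w h

end Stmt1Aux
open CoxPerp in
/-- every non-backtracking walk between two vertices of a pre-cycle core stays
in the pre-cycle core. -/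
theorem statement_1 {V : Type*} (G : SimpleGraph V) (I : Set V)
    (hG : G.Connected) (hI : IsPreCycleCore G I)
    (y z : V) (hy : y ∈ I) (hz : z ∈ I)
    (p : G.Walk y z) (hp : IsNonBacktracking p) :
    ∀ v ∈ p.support, v ∈ I := by
  classical
  obtain ⟨⟨hne, hconn⟩, hcyc⟩ := hI
  suffices H : ∀ N (y z : V), y ∈ I → z ∈ I → ∀ p : G.Walk y z, p.length = N →
      IsNonBacktracking p → ∀ v ∈ p.support, v ∈ I from
    fun v hv => H p.length y z hy hz p rfl hp v hv
  clear hy hz hp p y z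
  intro N
  induction N using Nat.strong_induction_on with
  | _ N ih =>
  intro y z hy hz p hlen hp v hv
  by_contra hvI
  obtain ⟨kv, hkv, hkvle⟩ := SimpleGraph.Walk.mem_support_iff_exists_getVert.mp hv
  have hkv0 : kv ≠ 0 := by
    rintro rfl
    rw [p.getVert_zero] at hkv
    exact hvI (hkv ▸ hy)
  have hkvlen : kv ≠ p.length := by
    rintro rfl
    rw [p.getVert_length] at hkv
    exact hvI (hkv ▸ hz)
  by_cases hA : ∃ k, 0 < k ∧ k < p.length ∧ p.getVert k ∈ I
  · -- split the walk at an interior vertex of `I` and use the inductive hypothesis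
    obtain ⟨k, hk0, hkl, hkI⟩ := hA
    obtain ⟨q, r, hqr, hqlen⟩ := exists_split p k (le_of_lt hkl)
    have hsum : p.length = q.length + r.length := by
      have h := congrArg SimpleGraph.Walk.length hqr
      rwa [SimpleGraph.Walk.length_append] at h
    have hp' : List.Chain' (fun d d' => d'.toProd.2 ≠ d.toProd.1) p.darts := hp
    rw [hqr, SimpleGraph.Walk.darts_append] at hp'
    obtain ⟨h1, h2, -⟩ := List.isChain_append.mp hp'
    have hq := ih q.length (by omega) y _ hy hkI q rfl h1
    have hr := ih r.length (by omega) _ z hkI hz r rfl h2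
    rw [hqr, SimpleGraph.Walk.mem_support_append_iff] at hv
    rcases hv with hv | hv
    · exact hvI (hq v hv)
    · exact hvI (hr v hv)
  · push_neg at hA
    have hkvlt : kv < p.length := lt_of_le_of_ne hkvle hkvlen
    have hkv1 : 1 ≤ kv := by omega
    have hvnotI : p.getVert kv ∉ I := hvI ∘ (hkv ▸ id)
    have hlen2 : 2 ≤ p.length := by
      rcases Nat.lt_or_ge p.length 2 with h | h
      · exact absurd (by omega : kv = p.length) hkvlen
      · exact h
    by_cases hrep : ∃ d, 0 < d ∧ ∃ i, i + d ≤ p.length ∧ p.getVert i = p.getVert (i + d)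
    · -- a repeated vertex: extract a cyclic sequence avoiding `I`
      have hspec := Nat.find_spec hrep
      have hmin : ∀ d', d' < Nat.find hrep →
          ¬(0 < d' ∧ ∃ i', i' + d' ≤ p.length ∧ p.getVert i' = p.getVert (i' + d')) :=
        fun d' h => Nat.find_min hrep h
      set d₀ := Nat.find hrep with hd₀
      obtain ⟨hd₀pos, i, hid, hii⟩ := hspec
      have hd₀1 : d₀ ≠ 1 := by
        intro h1
        have hadj := p.adj_getVert_succ (show i < p.length by omega)
        rw [h1] at hii
        rw [← hii] at hadj
        exact G.loopless.irrefl _ hadj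
      have hd₀2 : d₀ ≠ 2 := by
        intro h2
        have := nb_getVert hp (show i + 2 ≤ p.length by omega)
        rw [h2] at hii
        exact this hii.symm
      have hd₀3 : 3 ≤ d₀ := by omega
      haveI : NeZero d₀ := ⟨by omega⟩
      set f : ZMod d₀ → V := fun m => p.getVert (i + m.val) with hf
      have hfinj : Function.Injective f := by
        intro a b hab
        simp only [hf] at hab
        have hav : a.val < d₀ := ZMod.val_lt a
        have hbv : b.val < d₀ := ZMod.val_lt b
        have key : ∀ x y : ℕ, x < y → y < d₀ →
            p.getVert (i + x) = p.getVert (i + y) → False := by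
          intro x y hxy hyd he
          have h3 : i + x + (y - x) = i + y := by omega
          refine hmin (y - x) (by omega) ⟨by omega, i + x, by omega, ?_⟩
          rw [h3]; exact he
        rcases lt_trichotomy a.val b.val with h | h | h
        · exact absurd hab (by intro he; exact key _ _ h hbv he)
        · exact ZMod.val_injective _ h
        · exact absurd hab (by intro he; exact key _ _ h hav he.symm)
      have hfadj : ∀ m, G.Adj (f m) (f (m + 1)) := by
        intro m
        have hmlt : m.val < d₀ := ZMod.val_lt m
        by_cases hme : m.val + 1 = d₀
        · rw [zmod_add_one_eq_zero hd₀3 m hme]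
          show G.Adj (p.getVert (i + m.val)) (p.getVert (i + (0 : ZMod d₀).val))
          rw [ZMod.val_zero, Nat.add_zero, hii]
          have h1 : i + d₀ = (i + m.val) + 1 := by omega
          rw [h1]
          exact p.adj_getVert_succ (by omega)
        · have hv1 : (m + 1).val = m.val + 1 := zmod_add_one_val hd₀3 m (by omega)
          show G.Adj (p.getVert (i + m.val)) (p.getVert (i + (m + 1).val))
          rw [hv1, show i + (m.val + 1) = (i + m.val) + 1 by omega]
          exact p.adj_getVert_succ (by omega)
      -- pick an interior vertex of the cyclic sequence, necessarily outside `I`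
      by_cases hi0 : i = 0
      · have h1d : (1 : ℕ) < d₀ := by omega
        have hval1 : ((1 : ℕ) : ZMod d₀).val = 1 := ZMod.val_cast_of_lt h1d
        have hmem : f ((1 : ℕ) : ZMod d₀) = p.getVert 1 := by
          simp only [hf, hval1, hi0, Nat.zero_add]
        have hnotI : p.getVert 1 ∉ I := hA 1 (by omega) (by omega)
        obtain ⟨C, hC, hmemC⟩ :=
          cycSeq_to_induced d₀ f hd₀3 hfinj hfadj (p.getVert 1) ⟨_, hmem⟩
        exact hnotI (hcyc C hC hmemC)
      · have hmem : f 0 = p.getVert i := by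
          simp only [hf, ZMod.val_zero, Nat.add_zero]
        have hnotI : p.getVert i ∉ I := hA i (by omega) (by omega)
        obtain ⟨C, hC, hmemC⟩ :=
          cycSeq_to_induced d₀ f hd₀3 hfinj hfadj (p.getVert i) ⟨_, hmem⟩
        exact hnotI (hcyc C hC hmemC)
    · -- no repeated vertex: `p` is a path; close it up through `I` and extract a cycle
      push_neg at hrep
      have hσinj : ∀ a b, a ≤ p.length → b ≤ p.length →
          p.getVert a = p.getVert b → a = b := by
        intro a b ha hb he
        rcases lt_trichotomy a b with h | h | h
        · exfalso
          refine hrep (b - a) (by omega) a (by omega) ?_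
          rw [show a + (b - a) = b by omega]; exact he
        · exact h
        · exfalso
          refine hrep (a - b) (by omega) b (by omega) ?_
          rw [show b + (a - b) = a by omega]; exact he.symm
      have hyz : y ≠ z := by
        intro h
        have h0 : p.getVert 0 = p.getVert p.length := by
          rw [p.getVert_zero, p.getVert_length, h]
        have := hσinj 0 p.length (by omega) le_rfl h0
        omega
      obtain ⟨r₀⟩ := hconn z hz y hy
      have hrPpath : r₀.bypass.IsPath := r₀.bypass_isPath
      have hle : CoxPerp.Restrict G I ≤ G := by intro a b hab; exact (show _ ∧ _ ∧ _ from hab).2.2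
      set r := r₀.bypass.mapLe hle with hr
      have hrpath : r.IsPath := hrPpath.mapLe hle
      set m := r.length with hm
      have hm1 : 1 ≤ m := by
        rcases Nat.eq_zero_or_pos m with h0 | h0
        · exact absurd (r.eq_of_length_eq_zero h0) hyz.symm
        · exact h0
      have hrsupp : ∀ s, s ≤ m → r.getVert s ∈ I := by
        intro s hs
        have hmem : r.getVert s ∈ r.support :=
          SimpleGraph.Walk.mem_support_iff_exists_getVert.mpr ⟨s, rfl, hs⟩
        rw [hr, SimpleGraph.Walk.mapLe, SimpleGraph.Walk.support_map] at hmem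
        obtain ⟨x, hx, hx2⟩ := List.mem_map.mp hmem
        have : x = r.getVert s := hx2
        rw [← this]
        exact restrict_support_mem r₀.bypass hz x hx
      have hrinj : ∀ a b, a ≤ m → b ≤ m → r.getVert a = r.getVert b → a = b :=
        fun a b ha hb he => isPath_getVert_inj hrpath ha hb he
      have hr0 : r.getVert 0 = z := r.getVert_zero
      have hrm : r.getVert m = y := r.getVert_length
      set N' := p.length + m with hN'
      haveI : NeZero N' := ⟨by omega⟩
      have hN'3 : 3 ≤ N' := by omega
      set f : ZMod N' → V := fun km =>
        if km.val < p.length then p.getVert km.val else r.getVert (km.val - p.length) with hf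
      have hfinj : Function.Injective f := by
        intro a b hab
        have hav : a.val < N' := ZMod.val_lt a
        have hbv : b.val < N' := ZMod.val_lt b
        simp only [hf] at hab
        have key : ∀ x s : ℕ, x < p.length → s ≤ m - 1 →
            p.getVert x ≠ r.getVert s ∨ (x = 0 ∧ False) := by
          intro x s hx hs
          left
          intro he
          rcases Nat.eq_zero_or_pos x with rfl | hx0
          · rw [p.getVert_zero] at he
            have : s = m := hrinj s m (by omega) le_rfl (by rw [← he, hrm])
            omega
          · exact (hA x hx0 hx) (he ▸ hrsupp s (by omega))
        apply ZMod.val_injective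
        split_ifs at hab with h1 h2 h2
        · exact hσinj _ _ (by omega) (by omega) hab
        · rcases key a.val (b.val - p.length) h1 (by omega) with h | ⟨-, h⟩
          · exact absurd hab h
          · exact h.elim
        · rcases key b.val (a.val - p.length) h2 (by omega) with h | ⟨-, h⟩
          · exact absurd hab.symm h
          · exact h.elim
        · have := hrinj (a.val - p.length) (b.val - p.length) (by omega) (by omega) hab
          omega
      have hfadj : ∀ mm, G.Adj (f mm) (f (mm + 1)) := by
        intro mm
        have hmlt : mm.val < N' := ZMod.val_lt mm
        by_cases hend : mm.val + 1 = N'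
        · rw [zmod_add_one_eq_zero hN'3 mm hend]
          have hge : ¬ mm.val < p.length := by omega
          have e1 : f mm = r.getVert (m - 1) := by
            simp only [hf, if_neg hge]
            congr 1
            omega
          have e2 : f 0 = y := by
            simp only [hf, ZMod.val_zero, if_pos (show 0 < p.length by omega)]
            exact p.getVert_zero
          rw [e1, e2]
          have hstep := r.adj_getVert_succ (show m - 1 < r.length by omega)
          rwa [show m - 1 + 1 = m by omega, hrm] at hstep
        · have hv1 : (mm + 1).val = mm.val + 1 := zmod_add_one_val hN'3 mm (by omega)
          rcases Nat.lt_trichotomy (mm.val + 1) p.length with h | h | h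
          · have e1 : f mm = p.getVert mm.val := by simp only [hf, if_pos (by omega : mm.val < p.length)]
            have e2 : f (mm + 1) = p.getVert (mm.val + 1) := by
              simp only [hf, hv1, if_pos h]
            rw [e1, e2]
            exact p.adj_getVert_succ (by omega)
          · have e1 : f mm = p.getVert mm.val := by simp only [hf, if_pos (by omega : mm.val < p.length)]
            have e2 : f (mm + 1) = z := by
              simp only [hf, hv1, if_neg (show ¬ mm.val + 1 < p.length by omega)]
              rw [show mm.val + 1 - p.length = 0 by omega]
              exact hr0
            rw [e1, e2]
            have := p.adj_getVert_succ (show mm.val < p.length by omega)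
            rwa [h, p.getVert_length] at this
          · have hge : ¬ mm.val < p.length := by omega
            have e1 : f mm = r.getVert (mm.val - p.length) := by simp only [hf, if_neg hge]
            have e2 : f (mm + 1) = r.getVert ((mm.val - p.length) + 1) := by
              simp only [hf, hv1, if_neg (show ¬ mm.val + 1 < p.length by omega)]
              congr 1
              omega
            rw [e1, e2]
            exact r.adj_getVert_succ (by omega)
      have hvmem : f ((kv : ℕ) : ZMod N') = v := by
        have hval : ((kv : ℕ) : ZMod N').val = kv := ZMod.val_cast_of_lt (by omega)
        simp only [hf, hval, if_pos hkvlt]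
        exact hkv
      obtain ⟨C, hC, hmemC⟩ := cycSeq_to_induced N' f hN'3 hfinj hfadj v ⟨_, hvmem⟩
      exact hvI (hcyc C hC hmemC)
end

section
/- Let G be a connected simple graph containing at least one cycle. Then the intersection of any nonempty (possibly infinite) family of pre-cycle cores of G is again a pre-cycle core of G. Consequently, the cycle core of G (the unique minimal pre-cycle core) exists. -/
namespace CoxAux
open SimpleGraph Walk
open SimpleGraph Walk

variable {V : Type*} {G : SimpleGraph V}

lemma support_get_eq_getVert {u v : V} (w : G.Walk u v) :
    ∀ (k : ℕ) (hk : k < w.support.length), w.support.get ⟨k, hk⟩ = w.getVert k := by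
  induction w with
  | nil => intro k hk; simp at hk; subst hk; rfl
  | cons h p ih =>
    intro k hk
    cases k with
    | zero => rfl
    | succ k =>
      simp only [support_cons, List.get_cons_succ, getVert_cons_succ]
      exact ih k (by simp only [support_cons, List.length_cons] at hk; omega)

lemma mem_support_iff_getVert {u v y : V} (w : G.Walk u v) :
    y ∈ w.support ↔ ∃ k, k ≤ w.length ∧ w.getVert k = y := by
  rw [List.mem_iff_get]
  constructor
  · rintro ⟨⟨k, hk⟩, rfl⟩
    exact ⟨k, by simp [length_support] at hk; omega, (support_get_eq_getVert w k hk).symm⟩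
  · rintro ⟨k, hk, rfl⟩
    exact ⟨⟨k, by simp [length_support]; omega⟩, support_get_eq_getVert w k _⟩

lemma mem_edges_iff_getVert {u v : V} (w : G.Walk u v) (e : Sym2 V) :
    e ∈ w.edges ↔ ∃ k, k < w.length ∧ e = s(w.getVert k, w.getVert (k + 1)) := by
  induction w with
  | nil => simp
  | cons h p ih =>
    simp only [edges_cons, List.mem_cons, ih, length_cons]
    constructor
    · rintro (rfl | ⟨k, hk, rfl⟩)
      · exact ⟨0, by omega, by simp [getVert_zero, getVert_cons_succ]⟩
      · exact ⟨k + 1, by omega, by simp [getVert_cons_succ]⟩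
    · rintro ⟨k, hk, rfl⟩
      cases k with
      | zero => left; simp [getVert_zero, getVert_cons_succ]
      | succ k => right; exact ⟨k, by omega, by simp [getVert_cons_succ]⟩

lemma end_mem_tail_support {u v : V} (w : G.Walk u v) (hw : w.length ≠ 0) :
    v ∈ w.support.tail := by
  cases w with
  | nil => simp at hw
  | cons h p => simpa using end_mem_support p

lemma mem_support_iff_mem_tail {x y : V} (c : G.Walk x x) (hc : c.length ≠ 0) :
    y ∈ c.support ↔ y ∈ c.support.tail := by
  constructor
  · intro h
    rw [support_eq_cons] at h
    rcases List.mem_cons.mp h with rfl | h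
    · exact end_mem_tail_support c hc
    · exact h
  · intro h
    rw [support_eq_cons]
    exact List.mem_cons_of_mem _ h

lemma getVert_inj_of_isCycle {x : V} {c : G.Walk x x} (hc : c.IsCycle) {a b : ℕ}
    (ha : a < c.length) (hb : b < c.length) (h : c.getVert a = c.getVert b) : a = b := by
  have h3 := hc.three_le_length
  have hnd := hc.support_nodup
  have htl : c.support.tail.length = c.length := by
    simp [List.length_tail, length_support]
  have key : ∀ k (hk : k < c.length),
      c.support.tail.get ⟨k, by omega⟩ = c.getVert (k + 1) := by
    intro k hk
    rw [List.get_tail]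
    exact support_get_eq_getVert c (k + 1) (by simp [length_support]; omega)
  have main : ∀ a b : ℕ, 1 ≤ a → a ≤ c.length → 1 ≤ b → b ≤ c.length →
      c.getVert a = c.getVert b → a = b := by
    intro a b ha1 han hb1 hbn hab
    have h1 : c.support.tail.get ⟨a - 1, by omega⟩ = c.getVert a := by
      rw [key (a - 1) (by omega)]; congr 1; omega
    have h2 : c.support.tail.get ⟨b - 1, by omega⟩ = c.getVert b := by
      rw [key (b - 1) (by omega)]; congr 1; omega
    have := (List.Nodup.get_inj_iff hnd (i := ⟨a - 1, by omega⟩)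
      (j := ⟨b - 1, by omega⟩)).mp (by rw [h1, h2]; exact hab)
    have := Fin.mk.injEq (a-1) _ (b-1) _ ▸ this
    omega
  have hx0 : c.getVert 0 = c.getVert c.length := by
    rw [getVert_zero, getVert_length]
  rcases Nat.eq_zero_or_pos a with rfl | ha1
  · rcases Nat.eq_zero_or_pos b with rfl | hb1
    · rfl
    · have : c.length = b := main c.length b (by omega) le_rfl hb1 (le_of_lt hb)
        (by rw [← hx0, h])
      omega
  · rcases Nat.eq_zero_or_pos b with rfl | hb1
    · have : a = c.length := main a c.length ha1 (le_of_lt ha) (by omega) le_rfl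
        (by rw [h, hx0])
      omega
    · exact main a b ha1 (le_of_lt ha) hb1 (le_of_lt hb) h


section MoreAux
variable {V : Type*} {G : SimpleGraph V}

/-- Every (Mathlib) cycle of `G` lies inside any set containing all induced cycles. -/
lemma cycle_support_subset [DecidableEq V] {I : Set V}
    (hI : ∀ C, CoxPerp.IsInducedCycle G C → C ⊆ I) :
    ∀ (n : ℕ) {x : V} (c : G.Walk x x), c.IsCycle → c.length = n →
      ∀ y ∈ c.support, y ∈ I := by
  intro n
  induction n using Nat.strong_induction_on with
  | _ n IH =>
  intro x c hc hlen y hy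
  have h3 : 3 ≤ n := hlen ▸ hc.three_le_length
  by_cases hchord : ∃ s t, s ∈ c.support ∧ t ∈ c.support ∧ G.Adj s t ∧ s(s, t) ∉ c.edges
  · -- chord case : split the cycle into two shorter cycles
    obtain ⟨s, t, hs, ht, hadj, hne⟩ := hchord
    have hlen0 : c.length ≠ 0 := by omega
    set c' := c.rotate s hs with hc'def
    have hc' : c'.IsCycle := hc.rotate hs
    have hc'len : c'.length = c.length := by
      have := congr_arg Walk.length (take_spec c hs)
      rw [length_append] at this
      rw [hc'def, Walk.rotate, length_append]
      omega
    have hmemc' : ∀ z, z ∈ c.support ↔ z ∈ c'.support := by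
      intro z
      rw [mem_support_iff_mem_tail c hlen0, mem_support_iff_mem_tail c' (by omega),
        (support_rotate c s hs).mem_iff]
    have hedgec' : ∀ e, e ∈ c'.edges ↔ e ∈ c.edges := fun e =>
      (rotate_edges c s hs).perm.mem_iff
    have ht' : t ∈ c'.support := (hmemc' t).mp ht
    set p := c'.takeUntil t ht' with hp_def
    set q := c'.dropUntil t ht' with hq_def
    have hspec : p.append q = c' := take_spec c' ht'
    have hlensum : p.length + q.length = n := by
      have := congr_arg Walk.length hspec
      rw [length_append] at this
      omega
    -- both pieces have length ≥ 2
    have hplen : 2 ≤ p.length := by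
      rcases Nat.lt_or_ge p.length 2 with h | h
      · interval_cases hpl : p.length
        · exact absurd (Walk.eq_of_length_eq_zero hpl) hadj.ne
        · exfalso
          apply hne
          rw [← hedgec']
          have h1 : p.getVert 1 = t := by
            conv_lhs => rw [show (1 : ℕ) = p.length from hpl.symm]
            exact getVert_length p
          have : s(s, t) ∈ p.edges := by
            rw [mem_edges_iff_getVert]
            exact ⟨0, by omega, by rw [getVert_zero, Nat.zero_add, h1]⟩
          exact (edges_takeUntil_subset_edges c' ht') this
      · exact h
    have hqlen : 2 ≤ q.length := by
      rcases Nat.lt_or_ge q.length 2 with h | h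
      · interval_cases hql : q.length
        · exact absurd (Walk.eq_of_length_eq_zero hql) hadj.ne.symm
        · exfalso
          apply hne
          rw [← hedgec']
          have h1 : q.getVert 1 = s := by
            conv_lhs => rw [show (1 : ℕ) = q.length from hql.symm]
            exact getVert_length q
          have : s(t, s) ∈ q.edges := by
            rw [mem_edges_iff_getVert]
            exact ⟨0, by omega, by rw [getVert_zero, Nat.zero_add, h1]⟩
          have := (edges_dropUntil_subset_edges c' ht') this
          rwa [Sym2.eq_swap] at this
      · exact h
    -- support decomposition and nodup facts
    have hsupp : c'.support = p.support ++ q.support.tail := by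
      rw [← hspec, support_append]
    have htail : c'.support.tail = p.support.tail ++ q.support.tail := by
      rw [hsupp, List.tail_append_of_ne_nil (support_ne_nil p)]
    have hnd : (p.support.tail ++ q.support.tail).Nodup := htail ▸ hc'.support_nodup
    rw [List.nodup_append] at hnd
    obtain ⟨hnd1, hnd2, hdisj⟩ := hnd
    have hppath : p.IsPath := by
      rw [isPath_def, support_eq_cons, List.nodup_cons]
      refine ⟨fun hmem => ?_, hnd1⟩
      exact hdisj _ hmem _ (end_mem_tail_support q (by omega)) rfl
    have hqpath : q.IsPath := by
      rw [isPath_def, support_eq_cons, List.nodup_cons]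
      refine ⟨fun hmem => ?_, hnd2⟩
      exact hdisj _ (end_mem_tail_support p (by omega)) _ hmem rfl
    -- the two smaller cycles
    have hnp : s(t, s) ∉ p.edges := by
      intro hmem
      apply hne
      rw [← hedgec']
      have := (edges_takeUntil_subset_edges c' ht') hmem
      rwa [Sym2.eq_swap] at this
    have hnq : s(s, t) ∉ q.edges := by
      intro hmem
      exact hne ((hedgec' _).mp ((edges_dropUntil_subset_edges c' ht') hmem))
    have hcyc1 : (Walk.cons hadj.symm p).IsCycle :=
      (cons_isCycle_iff p hadj.symm).mpr ⟨hppath, hnp⟩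
    have hcyc2 : (Walk.cons hadj q).IsCycle :=
      (cons_isCycle_iff q hadj).mpr ⟨hqpath, hnq⟩
    have hIH1 := IH (p.length + 1) (by omega) (Walk.cons hadj.symm p) hcyc1 (by simp)
    have hIH2 := IH (q.length + 1) (by omega) (Walk.cons hadj q) hcyc2 (by simp)
    -- conclude
    have hy' : y ∈ c'.support := (hmemc' y).mp hy
    rw [hsupp, List.mem_append] at hy'
    rcases hy' with hy' | hy'
    · exact hIH1 y (by rw [support_cons]; exact List.mem_cons_of_mem _ hy')
    · refine hIH2 y ?_
      rw [support_cons]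
      refine List.mem_cons_of_mem _ ?_
      rw [support_eq_cons]
      exact List.mem_cons_of_mem _ hy'
  · -- chordless case : the support is an induced cycle
    push_neg at hchord
    haveI : NeZero n := ⟨by omega⟩
    set f : ZMod n → V := fun i => c.getVert i.val with hf
    have hfval : ∀ k, k ≤ n → f (k : ZMod n) = c.getVert k := by
      intro k hk
      rcases Nat.lt_or_ge k n with h | h
      · simp only [hf, ZMod.val_natCast, Nat.mod_eq_of_lt h]
      · have hkn : k = n := le_antisymm hk h
        subst hkn
        simp only [hf, ZMod.val_natCast, Nat.mod_self, getVert_zero]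
        rw [← hlen, getVert_length]
    have hinj : Function.Injective f := by
      intro i j hij
      have := getVert_inj_of_isCycle hc (a := i.val) (b := j.val)
        (by rw [hlen]; exact i.val_lt) (by rw [hlen]; exact j.val_lt) hij
      exact ZMod.val_injective n this
    have hmemf : ∀ i : ZMod n, f i ∈ c.support := by
      intro i
      rw [mem_support_iff_getVert]
      exact ⟨i.val, by rw [hlen]; exact le_of_lt i.val_lt, rfl⟩
    have hstep : ∀ k, k < n → f ((k : ZMod n) + 1) = c.getVert (k + 1) := by
      intro k hk
      have : ((k : ZMod n) + 1) = ((k + 1 : ℕ) : ZMod n) := by push_cast; ring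
      rw [this, hfval (k + 1) (by omega)]
    have hadjf : ∀ i : ZMod n, G.Adj (f i) (f (i + 1)) := by
      intro i
      have hi : i.val < c.length := by rw [hlen]; exact i.val_lt
      have h1 : f i = c.getVert i.val := rfl
      have h2 : f (i + 1) = c.getVert (i.val + 1) := by
        have h' := hstep i.val i.val_lt
        rwa [ZMod.natCast_zmod_val i] at h'
      rw [h1, h2]
      exact adj_getVert_succ c hi
    have hchordfree : ∀ i j : ZMod n, G.Adj (f i) (f j) → j = i + 1 ∨ i = j + 1 := by
      intro i j hadj'
      have hedge : s(f i, f j) ∈ c.edges := hchord _ _ (hmemf i) (hmemf j) hadj'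
      rw [mem_edges_iff_getVert] at hedge
      obtain ⟨k, hk, hke⟩ := hedge
      rw [Sym2.eq_iff] at hke
      have hgk : c.getVert k = f (k : ZMod n) := (hfval k (by omega)).symm
      have hgk1 : c.getVert (k + 1) = f ((k : ZMod n) + 1) := (hstep k (by omega)).symm
      rcases hke with ⟨h1, h2⟩ | ⟨h1, h2⟩
      · left
        rw [hgk] at h1
        rw [hgk1] at h2
        rw [hinj h1, hinj h2]
      · right
        rw [hgk1] at h1
        rw [hgk] at h2
        rw [hinj h1, hinj h2]
    have hCsub : Set.range f ⊆ I :=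
      hI (Set.range f) ⟨n, f, h3, hinj, rfl, hadjf, hchordfree⟩
    rw [mem_support_iff_getVert] at hy
    obtain ⟨k, hk, rfl⟩ := hy
    rw [← hfval k (by omega)]
    exact hCsub ⟨_, rfl⟩

lemma restrict_walk_support {I : Set V} {a b : V}
    (w : (CoxPerp.Restrict G I).Walk a b) (ha : a ∈ I) : ∀ y ∈ w.support, y ∈ I := by
  induction w with
  | nil => intro y hy; rw [support_nil, List.mem_singleton] at hy; exact hy ▸ ha
  | cons h p ih =>
    intro y hy
    rw [support_cons, List.mem_cons] at hy
    rcases hy with rfl | hy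
    · exact ha
    · exact ih (by rcases h with ⟨_, h2, _⟩; exact h2) y hy

lemma no_escape {I : Set V} (hI : CoxPerp.IsPreCycleCore G I) {a a₁ c : V}
    (h : G.Adj a a₁) (r : G.Walk a₁ c) (hp : (Walk.cons h r).IsPath)
    (ha : a ∈ I) (ha₁ : a₁ ∉ I) (hcI : c ∈ I)
    (hr : ∀ y ∈ r.support, y ≠ c → y ∉ I) : False := by
  classical
  obtain ⟨⟨hne, hconn⟩, hcycsub⟩ := hI
  rw [cons_isPath_iff] at hp
  obtain ⟨hrpath, hanr⟩ := hp
  -- a path from a to c inside I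
  obtain ⟨w0⟩ := hconn a ha c hcI
  set wp := w0.toPath with hwp
  have hwpsupp : ∀ y ∈ (wp : (CoxPerp.Restrict G I).Walk a c).support, y ∈ I :=
    restrict_walk_support _ ha
  have hedges : ∀ e ∈ (wp : (CoxPerp.Restrict G I).Walk a c).edges, e ∈ G.edgeSet := by
    intro e he
    have := Walk.edges_subset_edgeSet _ he
    revert this
    refine e.ind (fun x y => ?_)
    intro hxy
    rcases hxy with ⟨_, _, h2⟩
    exact h2
  set β : G.Walk a c := Walk.transfer (wp : (CoxPerp.Restrict G I).Walk a c) G hedges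
    with hβ
  have hβsupp : ∀ y ∈ β.support, y ∈ I := by
    rw [hβ, support_transfer]
    exact hwpsupp
  have hβpath : β.IsPath := by
    rw [isPath_def, hβ, support_transfer, ← isPath_def]
    exact wp.2
  -- the closed walk
  set δ : G.Walk a₁ a := r.append β.reverse with hδ
  have hcnotin : c ∉ β.reverse.support.tail := by
    intro hmem
    have := hβpath.reverse
    rw [isPath_def, support_eq_cons, List.nodup_cons] at this
    exact this.1 hmem
  have hδpath : δ.IsPath := by
    rw [isPath_def, hδ, support_append, List.nodup_append]
    refine ⟨hrpath.support_nodup, ?_, ?_⟩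
    · have := hβpath.reverse
      rw [isPath_def, support_eq_cons, List.nodup_cons] at this
      exact this.2
    · intro z hz z' hz' hzz'
      subst hzz'
      have hzI : z ∈ I := by
        apply hβsupp
        have : z ∈ β.reverse.support := List.mem_of_mem_tail hz'
        rwa [support_reverse, List.mem_reverse] at this
      have hzc : z ≠ c := fun hzc => hcnotin (hzc ▸ hz')
      exact hr z hz hzc hzI
  have hδedge : s(a, a₁) ∉ δ.edges := by
    rw [hδ, edges_append, List.mem_append]
    rintro (hmem | hmem)
    · exact hanr (Walk.fst_mem_support_of_mem_edges r hmem)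
    · apply ha₁
      apply hβsupp
      have : a₁ ∈ β.reverse.support := Walk.snd_mem_support_of_mem_edges _ hmem
      rwa [support_reverse, List.mem_reverse] at this
  have hcyc0 : (Walk.cons h δ).IsCycle := (cons_isCycle_iff δ h).mpr ⟨hδpath, hδedge⟩
  have := cycle_support_subset hcycsub (Walk.cons h δ).length (Walk.cons h δ) hcyc0 rfl
    a₁ (by rw [support_cons]; exact List.mem_cons_of_mem _ (start_mem_support δ))
  exact ha₁ this

lemma first_I_split {I : Set V} : ∀ {a b : V} (q : G.Walk a b), b ∈ I →
    ∃ c, c ∈ I ∧ ∃ (r : G.Walk a c) (r' : G.Walk c b), q = r.append r' ∧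
      ∀ y ∈ r.support, y ≠ c → y ∉ I := by
  intro a b q
  induction q with
  | nil =>
    intro hb
    exact ⟨_, hb, Walk.nil, Walk.nil, rfl, fun y hy hne => by
      rw [support_nil, List.mem_singleton] at hy; exact absurd hy hne⟩
  | @cons u u₁ b h q' ih =>
    intro hb
    by_cases hu : u ∈ I
    · exact ⟨u, hu, Walk.nil, Walk.cons h q', rfl, fun y hy hne => by
        rw [support_nil, List.mem_singleton] at hy; exact absurd hy hne⟩
    · obtain ⟨c, hcI, r, r', heq, hrI⟩ := ih hb
      refine ⟨c, hcI, Walk.cons h r, r', by rw [heq, Walk.cons_append], ?_⟩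
      intro y hy hne
      rw [support_cons, List.mem_cons] at hy
      rcases hy with rfl | hy
      · exact hu
      · exact hrI y hy hne

lemma path_subset {I : Set V} (hI : CoxPerp.IsPreCycleCore G I) :
    ∀ {u v : V} (p : G.Walk u v), p.IsPath → u ∈ I → v ∈ I → ∀ y ∈ p.support, y ∈ I := by
  intro u v p
  induction p with
  | nil =>
    intro _ hu _ y hy
    rw [support_nil, List.mem_singleton] at hy
    exact hy ▸ hu
  | @cons u u₁ v h q' ih =>
    intro hp hu hv y hy
    by_cases hu₁ : u₁ ∈ I
    · rw [support_cons, List.mem_cons] at hy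
      rcases hy with rfl | hy
      · exact hu
      · exact ih (hp.of_cons) hu₁ hv y hy
    · exfalso
      obtain ⟨c, hcI, r, r', heq, hrI⟩ := first_I_split q' hv
      have hpr : (Walk.cons h r).IsPath := by
        rw [heq] at hp
        rw [cons_isPath_iff] at hp ⊢
        exact ⟨hp.1.of_append_left,
          fun hmem => hp.2 (subset_support_append_left _ _ hmem)⟩
      exact no_escape hI h r hpr hu hu₁ hcI hrI
end MoreAux

end CoxAux

open CoxPerp in
/-- the intersection of a nonempty family of pre-cycle cores is a pre-cycle core;
consequently the cycle core exists. -/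
theorem statement_2 {V : Type*} (G : SimpleGraph V)
    (hG : G.Connected) (hcyc : HasCycle G) :
    (∀ 𝒮 : Set (Set V), 𝒮.Nonempty → (∀ I ∈ 𝒮, IsPreCycleCore G I) →
      IsPreCycleCore G (⋂₀ 𝒮)) ∧
    ∃ K, IsCycleCore G K := by
  classical
  -- a nonempty set contained in every pre-cycle core
  obtain ⟨C₀, hC₀⟩ := hcyc
  have hC₀ne : C₀.Nonempty := by
    obtain ⟨n, f, hn3, _, hrange, _, _⟩ := hC₀
    haveI : NeZero n := ⟨by omega⟩
    exact ⟨f 0, by rw [← hrange]; exact ⟨0, rfl⟩⟩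
  have main : ∀ 𝒮 : Set (Set V), 𝒮.Nonempty → (∀ I ∈ 𝒮, IsPreCycleCore G I) →
      IsPreCycleCore G (⋂₀ 𝒮) := by
    intro 𝒮 h𝒮ne h𝒮
    have hsub : ∀ C, IsInducedCycle G C → C ⊆ ⋂₀ 𝒮 := by
      intro C hC
      intro z hz
      rw [Set.mem_sInter]
      intro I hI
      exact (h𝒮 I hI).2 C hC hz
    refine ⟨⟨?_, ?_⟩, hsub⟩
    · obtain ⟨z, hz⟩ := hC₀ne
      exact ⟨z, hsub C₀ hC₀ hz⟩
    · intro u hu v hv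
      obtain ⟨w0⟩ := hG.preconnected u v
      set p := w0.toPath with hp
      have hsupp : ∀ y ∈ (p : G.Walk u v).support, y ∈ ⋂₀ 𝒮 := by
        intro y hy
        rw [Set.mem_sInter]
        intro I hI
        exact CoxAux.path_subset (h𝒮 I hI) (p : G.Walk u v) p.2
          (Set.mem_sInter.mp hu I hI) (Set.mem_sInter.mp hv I hI) y hy
      have hedges : ∀ e ∈ (p : G.Walk u v).edges, e ∈ (Restrict G (⋂₀ 𝒮)).edgeSet := by
        intro e he
        have hG' : e ∈ G.edgeSet := SimpleGraph.Walk.edges_subset_edgeSet _ he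
        revert hG' he
        refine e.ind (fun x y => ?_)
        intro he hG'
        exact (⟨hsupp x (SimpleGraph.Walk.fst_mem_support_of_mem_edges _ he),
          hsupp y (SimpleGraph.Walk.snd_mem_support_of_mem_edges _ he), hG'⟩ :
            x ∈ ⋂₀ 𝒮 ∧ y ∈ ⋂₀ 𝒮 ∧ G.Adj x y)
      exact ⟨SimpleGraph.Walk.transfer (p : G.Walk u v) (Restrict G (⋂₀ 𝒮)) hedges⟩
  refine ⟨main, ⋂₀ {I | IsPreCycleCore G I}, ?_, ?_⟩
  · apply main
    · refine ⟨Set.univ, ⟨⟨?_, ?_⟩, fun C _ => Set.subset_univ C⟩⟩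
      · obtain ⟨z, _⟩ := hC₀ne
        exact ⟨z, Set.mem_univ z⟩
      · intro u _ v _
        obtain ⟨w0⟩ := hG.preconnected u v
        have hedges : ∀ e ∈ w0.edges, e ∈ (Restrict G Set.univ).edgeSet := by
          intro e he
          have hG' : e ∈ G.edgeSet := SimpleGraph.Walk.edges_subset_edgeSet _ he
          revert hG' he
          refine e.ind (fun x y => ?_)
          intro he hG'
          exact (⟨Set.mem_univ x, Set.mem_univ y, hG'⟩ :
            x ∈ Set.univ ∧ y ∈ Set.univ ∧ G.Adj x y)
        exact ⟨SimpleGraph.Walk.transfer w0 (Restrict G Set.univ) hedges⟩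
    · exact fun I hI => hI
  · intro I hI
    exact Set.sInter_subset_of_mem hI
end

section
/- Let G be a connected simple graph, let I ⊆ V(G) and x ∈ I. If every non-backtracking closed walk in G based at x has all of its vertices in I (equivalently, if the fundamental group of the induced subgraph G|_I at x equals that of G at x), then the connected component of the induced subgraph G|_I containing x contains every cycle of G. -/
section Aux

open SimpleGraph

variable {V : Type*} {G : SimpleGraph V}

lemma isNonBacktracking_of_isPath {u v : V} {p : G.Walk u v} (hp : p.IsPath) :
    CoxPerp.IsNonBacktracking p := by
  induction p with
  | nil => simp [CoxPerp.IsNonBacktracking, List.Chain']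
  | cons h q ih =>
    rw [SimpleGraph.Walk.cons_isPath_iff] at hp
    have hq := ih hp.1
    unfold CoxPerp.IsNonBacktracking at *
    rw [SimpleGraph.Walk.darts_cons]
    refine List.isChain_cons.2 ⟨?_, hq⟩
    intro d hd hc
    apply hp.2
    have hmem : d ∈ q.darts := List.mem_of_mem_head? hd
    have := q.dart_snd_mem_support_of_mem_darts hmem
    rwa [hc] at this

lemma exists_path_to_set [DecidableEq V] {x b : V} (C : Set V)
    (p : G.Walk x b) (hb : b ∈ C) :
    ∃ c ∈ C, ∃ q : G.Walk x c, q.IsPath ∧ ∀ v ∈ q.support, v ∈ C → v = c := by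
  induction p with
  | nil => exact ⟨_, hb, Walk.nil, Walk.IsPath.nil, by simp⟩
  | @cons a y b h p ih =>
    by_cases hx : a ∈ C
    · exact ⟨a, hx, Walk.nil, by simp, by simp⟩
    · obtain ⟨c, hc, q, _, honly⟩ := ih hb
      refine ⟨c, hc, ((Walk.cons h q).toPath : G.Path a c).1,
        ((Walk.cons h q).toPath : G.Path a c).2, ?_⟩
      intro v hv hvC
      have hsub := (Walk.cons h q).support_toPath_subset hv
      rw [Walk.support_cons, List.mem_cons] at hsub
      rcases hsub with rfl | hsub
      · exact absurd hvC hx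
      · exact honly v hsub hvC

/-- The dart `(g k, g (k+1))` (natural-number indexing) of a cyclic adjacency system. -/
def gdart {n : ℕ} (g : ZMod n → V) (hadj : ∀ i, G.Adj (g i) (g (i + 1))) (k : ℕ) : G.Dart :=
  ⟨(g (k : ℕ), g ((k + 1 : ℕ))), by
    have := hadj (k : ℕ)
    have e : ((k : ℕ) : ZMod n) + 1 = (((k + 1 : ℕ)) : ZMod n) := by push_cast; ring
    rwa [e] at this⟩

/-- Walk `g (n-m) → g (n-m+1) → ⋯ → g n`. -/
def cycAux {n : ℕ} (g : ZMod n → V) (hadj : ∀ i, G.Adj (g i) (g (i + 1))) :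
    (m : ℕ) → G.Walk (g ((n - m : ℕ))) (g ((n : ℕ)))
  | 0 => SimpleGraph.Walk.nil.copy (congrArg g (by rw [Nat.sub_zero])) rfl
  | (m + 1) =>
    if h : m < n then
      SimpleGraph.Walk.cons
        (show G.Adj (g ((n - (m + 1) : ℕ))) (g ((n - m : ℕ))) by
          have := (gdart g hadj (n - (m + 1))).adj
          have e : (n - (m + 1)) + 1 = n - m := by omega
          rwa [show (gdart g hadj (n - (m+1))).toProd.1 = g ((n - (m+1) : ℕ)) from rfl,
            show (gdart g hadj (n - (m+1))).toProd.2 = g (((n - (m+1)) + 1 : ℕ)) from rfl,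
            e] at this)
        (cycAux g hadj m)
    else
      (cycAux g hadj m).copy (congrArg g (by congr 1; omega)) rfl

lemma cycAux_darts {n : ℕ} (g : ZMod n → V) (hadj : ∀ i, G.Adj (g i) (g (i + 1))) :
    ∀ m, m ≤ n → (cycAux g hadj m).darts = (List.range' (n - m) m).map (gdart g hadj) := by
  intro m
  induction m with
  | zero => intro _; simp [cycAux]
  | succ m ih =>
    intro hm
    have hmn : m < n := hm
    rw [cycAux, dif_pos hmn, Walk.darts_cons, ih (le_of_lt hmn)]
    have e1 : n - m = (n - (m + 1)) + 1 := by omega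
    have e2 : List.range' (n - (m + 1)) (m + 1) = (n - (m + 1)) :: List.range' (n - m) m := by
      rw [List.range'_succ, show n - (m + 1) + 1 = n - m from by omega]
    rw [e2, List.map_cons]
    congr 1
    apply SimpleGraph.Dart.ext
    show (g ((n - (m+1) : ℕ)), g ((n - m : ℕ))) = (g ((n - (m+1) : ℕ)), g (((n - (m+1)) + 1 : ℕ)))
    rw [e1]

end Aux

lemma mem_of_mem_getLast?' {α : Type*} {l : List α} {a : α} (h : a ∈ l.getLast?) : a ∈ l := by
  obtain ⟨hne, rfl⟩ := List.mem_getLast?_eq_getLast h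
  exact List.getLast_mem hne

open CoxPerp in
/-- if every non-backtracking closed walk at `x` stays in `I`, then the component
of `G|_I` containing `x` contains every cycle of `G`. -/
theorem statement_3 {V : Type*} (G : SimpleGraph V) (hG : G.Connected)
    (I : Set V) (x : V) (hx : x ∈ I)
    (h : ∀ w : G.Walk x x, IsNonBacktracking w → ∀ v ∈ w.support, v ∈ I) :
    ∀ C, IsInducedCycle G C → ∀ v ∈ C, (Restrict G I).Reachable x v := by
  classical
  intro C hC v hv
  obtain ⟨n, f, hn, hfinj, hfrange, hfadj, -⟩ := hC
  haveI : NeZero n := ⟨by omega⟩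
  have hb0 : f 0 ∈ C := hfrange ▸ Set.mem_range_self 0
  obtain ⟨p0⟩ := hG.preconnected x (f 0)
  obtain ⟨c, hcC, q, hq, honly⟩ := exists_path_to_set C p0 hb0
  obtain ⟨k0, hk0⟩ : ∃ k0, f k0 = c := by rwa [← Set.mem_range, hfrange]
  set g : ZMod n → V := fun i => f (i + k0) with hgdef
  have hginj : Function.Injective g := fun a b hab => add_right_cancel (hfinj hab)
  have hgrange : Set.range g = C := by
    rw [← hfrange]
    ext u
    constructor
    · rintro ⟨i, rfl⟩; exact ⟨i + k0, rfl⟩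
    · rintro ⟨i, rfl⟩; exact ⟨i - k0, by simp [hgdef]⟩
  have hgadj : ∀ i, G.Adj (g i) (g (i + 1)) := fun i => by
    have := hfadj (i + k0)
    simpa [hgdef, add_right_comm] using this
  have hg0 : g 0 = c := by simp [hgdef, hk0]
  let cyc : G.Walk c c :=
    (cycAux g hgadj n).copy
      (by rw [Nat.sub_self, Nat.cast_zero, hg0])
      (by rw [ZMod.natCast_self, hg0])
  have hdarts : cyc.darts = (List.range n).map (gdart g hgadj) := by
    show ((cycAux g hgadj n).copy _ _).darts = _
    rw [SimpleGraph.Walk.darts_copy, cycAux_darts g hgadj n le_rfl, Nat.sub_self,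
      show List.range' 0 n = List.range n from (List.range_eq_range' (n := n)).symm]
  have hrange_cons : List.range n = 0 :: List.range' 1 (n - 1) := by
    rw [List.range_eq_range']
    conv_lhs => rw [show n = (n - 1) + 1 from by omega]
    rw [List.range'_succ]
  have hrange_concat : List.range n = List.range (n - 1) ++ [n - 1] := by
    conv_lhs => rw [show n = (n - 1) + 1 from by omega]
    exact List.range_succ (n := n - 1)
  -- cast helpers
  have hcast : ∀ k : ℕ, ((k : ℕ) : ZMod n) + 1 = (((k + 1 : ℕ)) : ZMod n) := by
    intro k; push_cast; ring
  have hdvd : ∀ k : ℕ, ((k : ℕ) : ZMod n) = 0 → n ∣ k := by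
    intro k hk; exact (ZMod.natCast_eq_zero_iff k n).1 hk
  -- the closed walk
  let w : G.Walk x x := (q.append cyc).append q.reverse
  have hnb : IsNonBacktracking w := by
    show IsNonBacktracking ((q.append cyc).append q.reverse)
    unfold CoxPerp.IsNonBacktracking
    rw [SimpleGraph.Walk.darts_append, SimpleGraph.Walk.darts_append]
    have hcq := isNonBacktracking_of_isPath hq
    have hcrev := isNonBacktracking_of_isPath hq.reverse
    have hccyc : cyc.darts.Chain' fun d d' => d'.toProd.2 ≠ d.toProd.1 := by
      rw [hdarts, List.Chain', List.isChain_map,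
        show List.range n = List.range ((n - 1) + 1) from by rw [Nat.sub_add_cancel (by omega)],
        List.isChain_range_succ]
      intro m _
      show g (((m + 1) + 1 : ℕ)) ≠ g ((m : ℕ))
      intro heq
      have h2 : ((2 : ℕ) : ZMod n) = 0 := by
        have := hginj heq
        push_cast at this ⊢
        linear_combination this
      have := Nat.le_of_dvd (by norm_num) (hdvd 2 h2)
      omega
    refine (List.IsChain.append hcq hccyc ?_).append hcrev ?_
    · intro d hd d' hd'
      have hhead : cyc.darts.head? = some (gdart g hgadj 0) := by
        rw [hdarts, hrange_cons, List.map_cons]; rfl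
      rw [hhead, Option.mem_some_iff] at hd'
      subst hd'
      show g ((0 + 1 : ℕ)) ≠ d.toProd.1
      intro heq
      have hdq : d ∈ q.darts := mem_of_mem_getLast?' hd
      have hfst := q.dart_fst_mem_support_of_mem_darts hdq
      have hmemC : d.toProd.1 ∈ C := by
        rw [← hgrange]; exact ⟨((0 + 1 : ℕ) : ZMod n), heq⟩
      have hc1 : g ((0 + 1 : ℕ)) = g 0 := by
        rw [heq, honly _ hfst hmemC, hg0]
      have := Nat.le_of_dvd (by norm_num) (hdvd 1 (by have h1 := hginj hc1; simpa using h1))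
      omega
    · intro d hd d' hd'
      have hlast : (q.darts ++ cyc.darts).getLast? = some (gdart g hgadj (n - 1)) := by
        rw [hdarts, hrange_concat, List.map_append, List.map_singleton, ← List.append_assoc,
          List.getLast?_concat]
      rw [hlast, Option.mem_some_iff] at hd
      subst hd
      show d'.toProd.2 ≠ g ((n - 1 : ℕ))
      intro heq
      have hd'q : d' ∈ q.reverse.darts := List.mem_of_mem_head? hd'
      have hsnd := q.reverse.dart_snd_mem_support_of_mem_darts hd'q
      rw [SimpleGraph.Walk.support_reverse, List.mem_reverse] at hsnd
      have hmemC : d'.toProd.2 ∈ C := by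
        rw [← hgrange]; exact ⟨((n - 1 : ℕ) : ZMod n), heq.symm⟩
      have hc1 : g ((n - 1 : ℕ)) = g 0 := by
        rw [← heq, honly _ hsnd hmemC, hg0]
      have := Nat.le_of_dvd (by omega) (hdvd (n - 1) (by have h1 := hginj hc1; simpa using h1))
      omega
  have hIw := h w hnb
  have hqI : ∀ u ∈ q.support, u ∈ I := fun u hu => hIw u (by
    rw [SimpleGraph.Walk.mem_support_append_iff, SimpleGraph.Walk.mem_support_append_iff]
    exact Or.inl (Or.inl hu))
  have hCI : C ⊆ I := by
    intro u hu
    rw [← hgrange] at hu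
    obtain ⟨i, rfl⟩ := hu
    have hkd : gdart g hgadj i.val ∈ cyc.darts := by
      rw [hdarts]; exact List.mem_map_of_mem (List.mem_range.2 (ZMod.val_lt i))
    have hmem := cyc.dart_fst_mem_support_of_mem_darts hkd
    rw [show (gdart g hgadj i.val).toProd.1 = g ((i.val : ℕ) : ZMod n) from rfl,
      ZMod.natCast_zmod_val] at hmem
    refine hIw _ ?_
    rw [SimpleGraph.Walk.mem_support_append_iff, SimpleGraph.Walk.mem_support_append_iff]
    exact Or.inl (Or.inr hmem)
  have hedge : ∀ e ∈ q.edges, e ∈ (Restrict G I).edgeSet := by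
    intro e
    induction e using Sym2.ind with
    | _ a b =>
      intro he
      rw [SimpleGraph.mem_edgeSet]
      exact ⟨hqI a (q.fst_mem_support_of_mem_edges he),
        hqI b (q.snd_mem_support_of_mem_edges he), q.adj_of_mem_edges he⟩
  have Rxc : (Restrict G I).Reachable x c := ⟨q.transfer _ hedge⟩
  have Rc : ∀ k : ℕ, (Restrict G I).Reachable c (g ((k : ℕ))) := by
    intro k
    induction k with
    | zero => rw [Nat.cast_zero, hg0]
    | succ k ih =>
      refine ih.trans (SimpleGraph.Adj.reachable ?_)
      refine ⟨hCI ?_, hCI ?_, ?_⟩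
      · rw [← hgrange]; exact Set.mem_range_self _
      · rw [← hgrange]; exact Set.mem_range_self _
      · have := hgadj ((k : ℕ) : ZMod n)
        rwa [hcast k] at this
  rw [← hgrange] at hv
  obtain ⟨i, rfl⟩ := hv
  have := Rc i.val
  rw [ZMod.natCast_zmod_val] at this
  exact Rxc.trans this
end

section
/- Let (W,S) be a Coxeter system, x ∈ S, O = S_{∼x}^{odd}, and E = {s ∈ S∖O : m(y,s) < ∞ for some y ∈ O}. If W^{⊥x} is finitely generated, then E is finite. -/
namespace CoxPerpAux

open Real

noncomputable section

variable {B : Type*}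

/-- Chebyshev-like sequence: `Sv T n = sin (n θ) / sin θ` when `T = 2 cos θ`. -/
def Sp (T : ℝ) : ℕ → ℝ × ℝ
  | 0 => (0, 1)
  | n + 1 => ((Sp T n).2, T * (Sp T n).2 - (Sp T n).1)

def Sv (T : ℝ) (n : ℕ) : ℝ := (Sp T n).1

@[simp] lemma Sv_zero (T : ℝ) : Sv T 0 = 0 := rfl
@[simp] lemma Sv_one (T : ℝ) : Sv T 1 = 1 := rfl
lemma Sv_add_two (T : ℝ) (n : ℕ) : Sv T (n + 2) = T * Sv T (n + 1) - Sv T n := rfl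

lemma Sv_sin_aux (θ : ℝ) (n : ℕ) :
    Sv (2 * cos θ) n * sin θ = sin (n * θ) ∧
      Sv (2 * cos θ) (n + 1) * sin θ = sin ((n + 1 : ℕ) * θ) := by
  induction n with
  | zero => constructor <;> simp
  | succ n ih =>
    obtain ⟨ih1, ih2⟩ := ih
    constructor
    · exact ih2
    · rw [show n + 1 + 1 = n + 2 from rfl, Sv_add_two, sub_mul, mul_assoc, ih2, ih1]
      push_cast
      rw [show ((n : ℝ) + 2) * θ = ((n : ℝ) + 1) * θ + θ from by ring,
        show (n : ℝ) * θ = ((n : ℝ) + 1) * θ - θ from by ring, sin_add, sin_sub]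
      ring

lemma Sv_sin (θ : ℝ) (n : ℕ) : Sv (2 * cos θ) n * sin θ = sin (n * θ) :=
  (Sv_sin_aux θ n).1

lemma Sv_two (n : ℕ) : Sv 2 n = n := by
  induction n using Nat.twoStepInduction with
  | zero => simp
  | one => simp
  | more n ih1 ih2 =>
    rw [Sv_add_two, ih1, ih2]
    push_cast
    ring

def ee (i : B) : B →₀ ℝ := Finsupp.single i 1

variable (M : CoxeterMatrix B)

def Tval (i j : B) : ℝ := 2 * Real.cos (Real.pi / (M i j))

lemma Tval_symm (i j : B) : Tval M i j = Tval M j i := by rw [Tval, Tval, M.symmetric]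

def ff (i : B) : (B →₀ ℝ) →ₗ[ℝ] ℝ :=
  Finsupp.linearCombination ℝ (fun j => - Tval M i j)

lemma ff_ee (i j : B) : ff M i (ee j) = - Tval M i j := by
  simp [ff, ee]

lemma ff_ee_self (i : B) : ff M i (ee i) = 2 := by
  rw [ff_ee, Tval, M.diagonal i]
  norm_num

def sg (i : B) : (B →₀ ℝ) ≃ₗ[ℝ] (B →₀ ℝ) := Module.reflection (ff_ee_self M i)

lemma sg_apply (i : B) (v : B →₀ ℝ) : sg M i v = v - ff M i v • ee i := by
  rw [sg, Module.reflection_apply]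

@[simp] lemma sg_ee_self (i : B) : sg M i (ee i) = - ee i :=
  Module.reflection_apply_self (ff_ee_self M i)

lemma sg_ee_ne {i j : B} (h : i ≠ j) : sg M i (ee j) = ee j + Tval M i j • ee i := by
  rw [sg_apply, ff_ee, neg_smul, sub_neg_eq_add]

lemma sg_coord {i b : B} (h : b ≠ i) (v : B →₀ ℝ) : (sg M i v) b = v b := by
  rw [sg_apply, Finsupp.sub_apply, Finsupp.smul_apply, ee,
    Finsupp.single_eq_of_ne' (Ne.symm h)]
  simp

lemma lmul_apply (f g : (B →₀ ℝ) ≃ₗ[ℝ] (B →₀ ℝ)) (v : B →₀ ℝ) : (f * g) v = f (g v) := rfl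

lemma act1 {i j : B} (hij : i ≠ j) (n : ℕ) :
    ((sg M i * sg M j) ^ n) (ee i)
      = Sv (Tval M i j) (2 * n + 1) • ee i + Sv (Tval M i j) (2 * n) • ee j := by
  set T := Tval M i j with hT
  have hTji : Tval M j i = T := by rw [hT, Tval_symm]
  induction n with
  | zero => simp
  | succ n ih =>
    rw [pow_succ', lmul_apply, ih]
    simp only [map_add, map_smul, lmul_apply, sg_ee_ne M hij, sg_ee_ne M (Ne.symm hij),
      sg_ee_self, map_neg, smul_neg, hTji, ← hT]
    have s1 : Sv T (2 * (n + 1)) = T * Sv T (2 * n + 1) - Sv T (2 * n) := by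
      rw [show 2 * (n + 1) = 2 * n + 2 from by ring, Sv_add_two]
    have s2 : Sv T (2 * (n + 1) + 1) = T * Sv T (2 * (n + 1)) - Sv T (2 * n + 1) := by
      rw [show 2 * (n + 1) + 1 = (2 * n + 1) + 2 from by ring, Sv_add_two,
        show 2 * n + 1 + 1 = 2 * (n + 1) from by ring]
    rw [s2, s1]
    module

lemma act2 {i j : B} (hij : i ≠ j) (n : ℕ) :
    ((sg M i * sg M j) ^ (n + 1)) (ee j)
      = -(Sv (Tval M i j) (2 * n + 2) • ee i + Sv (Tval M i j) (2 * n + 1) • ee j) := by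
  set T := Tval M i j with hT
  have hTji : Tval M j i = T := by rw [hT, Tval_symm]
  induction n with
  | zero =>
    rw [pow_one, lmul_apply, sg_ee_self, map_neg, sg_ee_ne M hij, ← hT]
    rw [show (2 * 0 + 2 : ℕ) = 0 + 2 from rfl, show (2 * 0 + 1 : ℕ) = 1 from rfl, Sv_add_two, show (0 + 1 : ℕ) = 1 from rfl]
    simp only [Sv_zero, Sv_one]
    module
  | succ n ih =>
    rw [pow_succ', lmul_apply, ih]
    simp only [map_neg, map_add, map_smul, lmul_apply, sg_ee_ne M hij, sg_ee_ne M (Ne.symm hij),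
      sg_ee_self, smul_neg, hTji, ← hT]
    have s1 : Sv T (2 * (n + 1) + 1) = T * Sv T (2 * n + 2) - Sv T (2 * n + 1) := by
      rw [show 2 * (n + 1) + 1 = (2 * n + 1) + 2 from by ring, Sv_add_two,
        show 2 * n + 1 + 1 = 2 * n + 2 from by ring]
    have s2 : Sv T (2 * (n + 1) + 2) = T * Sv T (2 * (n + 1) + 1) - Sv T (2 * n + 2) := by
      rw [show 2 * (n + 1) + 2 = (2 * n + 2) + 2 from by ring, Sv_add_two,
        show 2 * n + 2 + 1 = 2 * (n + 1) + 1 from by ring]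
    rw [s2, s1]
    module

lemma lone_apply (v : B →₀ ℝ) : (1 : (B →₀ ℝ) ≃ₗ[ℝ] (B →₀ ℝ)) v = v := rfl

lemma sin_pos_aux {m : ℕ} (hm : 2 ≤ m) : 0 < Real.sin (π / m) := by
  have hm' : (1 : ℝ) < m := by exact_mod_cast hm.trans_lt' one_lt_two
  apply Real.sin_pos_of_pos_of_lt_pi
  · positivity
  · exact div_lt_self Real.pi_pos hm'

lemma Sv_val {m : ℕ} (hm : 2 ≤ m) (n : ℕ) (r : ℝ)
    (h : Real.sin (n * (π / m)) = r * Real.sin (π / m)) :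
    Sv (2 * Real.cos (π / m)) n = r :=
  mul_right_cancel₀ (ne_of_gt (sin_pos_aux hm)) (by rw [Sv_sin, h])

lemma Sv_2m {m : ℕ} (hm : 2 ≤ m) : Sv (2 * Real.cos (π / m)) (2 * m) = 0 := by
  have hm0 : (m : ℝ) ≠ 0 := by positivity
  apply Sv_val hm
  have : ((2 * m : ℕ) : ℝ) * (π / m) = 2 * π := by push_cast; field_simp
  rw [this, Real.sin_two_pi, zero_mul]

lemma Sv_2m1 {m : ℕ} (hm : 2 ≤ m) : Sv (2 * Real.cos (π / m)) (2 * m + 1) = 1 := by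
  have hm0 : (m : ℝ) ≠ 0 := by positivity
  apply Sv_val hm
  have : ((2 * m + 1 : ℕ) : ℝ) * (π / m) = 2 * π + π / m := by push_cast; field_simp
  rw [this, Real.sin_add, Real.sin_two_pi, Real.cos_two_pi]
  ring

lemma Sv_m1 {m : ℕ} (hm : 2 ≤ m) : Sv (2 * Real.cos (π / m)) (m + 1) = -1 := by
  have hm0 : (m : ℝ) ≠ 0 := by positivity
  apply Sv_val hm
  have : ((m + 1 : ℕ) : ℝ) * (π / m) = π + π / m := by push_cast; field_simp
  rw [this, Real.sin_add, Real.sin_pi, Real.cos_pi]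
  ring

lemma Sv_2m_sub1 {m : ℕ} (hm : 2 ≤ m) {n : ℕ} (hn : n + 1 = 2 * m) :
    Sv (2 * Real.cos (π / m)) n = -1 := by
  have hm0 : (m : ℝ) ≠ 0 := by positivity
  apply Sv_val hm
  have hn' : (n : ℝ) = 2 * m - 1 := by
    have : ((n : ℝ) + 1) = 2 * m := by exact_mod_cast congrArg (Nat.cast : ℕ → ℝ) hn
    linarith
  have : (n : ℝ) * (π / m) = 2 * π - π / m := by rw [hn']; field_simp
  rw [this, Real.sin_sub, Real.sin_two_pi, Real.cos_two_pi]
  ring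

lemma isLiftable : M.IsLiftable (sg M) := by
  intro i j
  rcases eq_or_ne i j with rfl | hij
  · rw [M.diagonal, pow_one]
    exact LinearEquiv.ext fun v => Module.involutive_reflection (ff_ee_self M i) v
  by_cases hm0 : M i j = 0
  · rw [hm0, pow_zero]
  have hm2 : 2 ≤ M i j := by have := M.off_diagonal i j hij; omega
  have hθ : Tval M i j = 2 * Real.cos (π / (M i j)) := rfl
  have hsin : 0 < Real.sin (π / (M i j)) := sin_pos_aux hm2
  have hD : (4 : ℝ) - Tval M i j ^ 2 ≠ 0 := by
    have h1 : Real.sin (π / (M i j)) ^ 2 + Real.cos (π / (M i j)) ^ 2 = 1 :=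
      Real.sin_sq_add_cos_sq _
    have : (4 : ℝ) - Tval M i j ^ 2 = 4 * Real.sin (π / (M i j)) ^ 2 := by
      rw [hθ]; nlinarith [h1]
    rw [this]
    positivity
  apply LinearEquiv.ext
  intro v
  set T := Tval M i j with hT
  set a := (2 * ff M i v + T * ff M j v) / (4 - T ^ 2) with ha
  set b := (2 * ff M j v + T * ff M i v) / (4 - T ^ 2) with hb
  set u := v - a • ee i - b • ee j with hu
  have hffji : ff M j (ee i) = -T := by rw [ff_ee, hT, Tval_symm]
  have hfi : ff M i u = 0 := by
    rw [hu]
    simp only [map_sub, map_smul, smul_eq_mul]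
    rw [ff_ee_self, ff_ee M i j, ← hT, ha, hb]
    field_simp
    ring
  have hfj : ff M j u = 0 := by
    rw [hu]
    simp only [map_sub, map_smul, smul_eq_mul]
    rw [ff_ee_self, hffji, ha, hb]
    field_simp
    ring
  have hui : sg M i u = u := by rw [sg_apply, hfi, zero_smul, sub_zero]
  have huj : sg M j u = u := by rw [sg_apply, hfj, zero_smul, sub_zero]
  have hfix : ∀ n : ℕ, ((sg M i * sg M j) ^ n) u = u := by
    intro n
    induction n with
    | zero => rw [pow_zero, lone_apply]
    | succ n ih => rw [pow_succ', lmul_apply, ih, lmul_apply, huj, hui]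
  obtain ⟨p, hp⟩ : ∃ p, M i j = p + 2 := ⟨M i j - 2, by omega⟩
  have hv : v = u + a • ee i + b • ee j := by rw [hu]; abel
  have hTcos : Tval M i j = 2 * Real.cos (π / (M i j)) := rfl
  have hei : ((sg M i * sg M j) ^ (M i j)) (ee i) = ee i := by
    rw [act1 M hij, hTcos, Sv_2m1 hm2, Sv_2m hm2]
    module
  have hej : ((sg M i * sg M j) ^ (M i j)) (ee j) = ee j := by
    rw [show M i j = (p + 1) + 1 from by omega, act2 M hij, hTcos]
    have e1 : 2 * (p + 1) + 2 = 2 * M.M i j := by omega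
    have e2 : (2 * (p + 1) + 1) + 1 = 2 * M.M i j := by omega
    rw [e1, Sv_2m hm2, Sv_2m_sub1 hm2 e2]
    module
  rw [hv, map_add, map_add, map_smul, map_smul, hfix, hei, hej, lone_apply]
variable {W : Type*} [Group W]

/-- The standard geometric representation. -/
def rep (cs : CoxeterSystem M W) : W →* ((B →₀ ℝ) ≃ₗ[ℝ] (B →₀ ℝ)) :=
  cs.lift ⟨sg M, isLiftable M⟩

lemma rep_simple (cs : CoxeterSystem M W) (i : B) : rep M cs (cs.simple i) = sg M i :=
  cs.lift_apply_simple (isLiftable M) i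

/-- The order of `sᵢ sⱼ` is exactly `M i j`. -/
theorem orderOf_simple_mul (cs : CoxeterSystem M W) (i j : B) :
    orderOf (cs.simple i * cs.simple j) = M i j := by
  rcases eq_or_ne i j with rfl | hij
  · rw [cs.simple_mul_simple_self, orderOf_one, M.diagonal]
  have hdvd : orderOf (cs.simple i * cs.simple j) ∣ M i j :=
    orderOf_dvd_of_pow_eq_one (cs.simple_mul_simple_pow i j)
  set d := orderOf (cs.simple i * cs.simple j) with hd
  have hrep : (sg M i * sg M j) ^ d = 1 := by
    have h := pow_orderOf_eq_one (cs.simple i * cs.simple j)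
    rw [← hd] at h
    have := congrArg (rep M cs) h
    rwa [map_pow, map_mul, rep_simple, rep_simple, map_one] at this
  have h2 := act1 M hij d
  rw [hrep, lone_apply] at h2
  by_cases hm0 : M i j = 0
  · rw [hm0]
    by_contra hne
    have h3 := congrArg (fun v : B →₀ ℝ => v j) h2
    have hT2 : Tval M i j = 2 := by
      rw [Tval, hm0]
      norm_num
    simp only [ee, Finsupp.single_eq_of_ne' hij, Finsupp.add_apply, Finsupp.smul_apply,
      Finsupp.single_eq_same, smul_eq_mul, mul_one, mul_zero, zero_add, hT2, Sv_two] at h3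
    have : 2 * d = 0 := by exact_mod_cast h3.symm
    omega
  have hm2 : 2 ≤ M i j := by have := M.off_diagonal i j hij; omega
  have hdne : d ≠ 0 := by
    intro h
    rw [h] at hdvd
    exact hm0 (Nat.eq_zero_of_zero_dvd hdvd)
  have hdle : d ≤ M i j := Nat.le_of_dvd (by omega) hdvd
  rcases eq_or_lt_of_le hdle with heq | hlt
  · exact heq
  exfalso
  have hTcos : Tval M i j = 2 * Real.cos (π / (M i j)) := rfl
  have hcj : Sv (2 * Real.cos (π / (M i j))) (2 * d) = 0 := by
    have h3 := congrArg (fun v : B →₀ ℝ => v j) h2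
    simp only [ee, Finsupp.single_eq_of_ne' hij, Finsupp.add_apply, Finsupp.smul_apply,
      Finsupp.single_eq_same, smul_eq_mul, mul_one, mul_zero, zero_add, hTcos] at h3
    exact h3.symm
  have hci : Sv (2 * Real.cos (π / (M i j))) (2 * d + 1) = 1 := by
    have h3 := congrArg (fun v : B →₀ ℝ => v i) h2
    simp only [ee, Finsupp.single_eq_of_ne' (Ne.symm hij), Finsupp.add_apply, Finsupp.smul_apply,
      Finsupp.single_eq_same, smul_eq_mul, mul_one, mul_zero, add_zero, hTcos] at h3
    exact h3.symm
  set m := M i j with hm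
  have hmR : (0 : ℝ) < m := by exact_mod_cast (by omega : 0 < m)
  have hm0' : (m : ℝ) ≠ 0 := ne_of_gt hmR
  set θ := π / (m : ℝ) with hθdef
  have hθpos : 0 < θ := by positivity
  have hπ : (0 : ℝ) < π := Real.pi_pos
  have hsin0 : Real.sin ((2 * d : ℕ) * θ) = 0 := by
    have h4 := Sv_sin θ (2 * d)
    rw [hcj, zero_mul] at h4
    exact h4.symm
  have hlb : 0 < ((2 * d : ℕ) : ℝ) * θ := by
    have : (0 : ℝ) < ((2 * d : ℕ) : ℝ) := by exact_mod_cast (by omega : 0 < 2 * d)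
    positivity
  have hub : ((2 * d : ℕ) : ℝ) * θ < 2 * π := by
    have hdm : ((2 * d : ℕ) : ℝ) < 2 * m := by exact_mod_cast (by omega : 2 * d < 2 * m)
    have hb2 : ((2 * d : ℕ) : ℝ) * θ < (2 * m) * θ := mul_lt_mul_of_pos_right hdm hθpos
    have hb3 : (2 * (m : ℝ)) * θ = 2 * π := by rw [hθdef]; field_simp
    linarith
  have heq2 : ((2 * d : ℕ) : ℝ) * θ = π := by
    have h5 : Real.sin (((2 * d : ℕ) : ℝ) * θ - π) = 0 := by
      rw [Real.sin_sub_pi, hsin0, neg_zero]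
    have h6 := (Real.sin_eq_zero_iff_of_lt_of_lt (by linarith) (by linarith)).mp h5
    linarith
  have h2d : 2 * d = m := by
    rw [hθdef, ← mul_div_assoc, div_eq_iff hm0'] at heq2
    have : ((2 * d : ℕ) : ℝ) = m := mul_right_cancel₀ (ne_of_gt hπ) (by linarith [heq2])
    exact_mod_cast this
  have hSm1 := Sv_m1 hm2
  rw [← hθdef] at hSm1
  rw [show 2 * d + 1 = m + 1 from by omega] at hci
  linarith [hci, hSm1]
lemma conj_simple_odd (cs : CoxeterSystem M W) {a b : B} {q : ℕ} (h : M a b = 2 * q + 1) :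
    ((cs.simple a * cs.simple b) ^ q) * cs.simple a * ((cs.simple a * cs.simple b) ^ q)⁻¹
      = cs.simple b := by
  set p := cs.simple a * cs.simple b with hp
  have hrel : p ^ (2 * q + 1) = 1 := by rw [hp, ← h]; exact cs.simple_mul_simple_pow a b
  have hinv : p⁻¹ = cs.simple b * cs.simple a := by
    rw [hp, mul_inv_rev, cs.inv_simple, cs.inv_simple]
  have hsc : SemiconjBy (cs.simple a) p⁻¹ p := by
    show cs.simple a * p⁻¹ = p * cs.simple a
    rw [hinv, hp, mul_assoc]
  have hscq := (hsc.pow_right q).eq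
  have h2q : p ^ (2 * q) = p⁻¹ := by
    apply eq_inv_of_mul_eq_one_left
    rw [← pow_succ]
    exact hrel
  calc p ^ q * cs.simple a * (p ^ q)⁻¹
      = p ^ q * (cs.simple a * (p⁻¹) ^ q) := by rw [← inv_pow, mul_assoc]
    _ = p ^ q * (p ^ q * cs.simple a) := by rw [hscq]
    _ = p ^ (2 * q) * cs.simple a := by rw [← mul_assoc, ← pow_add, two_mul]
    _ = p⁻¹ * cs.simple a := by rw [h2q]
    _ = cs.simple b := by rw [hinv, mul_assoc, cs.simple_mul_simple_self, mul_one]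

lemma wordProd_mem_closure (cs : CoxeterSystem M W) (A : Set B) (ω : List B)
    (hω : ∀ b ∈ ω, b ∈ A) :
    cs.wordProd ω ∈ Subgroup.closure (cs.simple '' A) := by
  induction ω with
  | nil => rw [cs.wordProd_nil]; exact one_mem _
  | cons a ω ih =>
    rw [cs.wordProd_cons]
    exact mul_mem (Subgroup.subset_closure ⟨a, hω a (List.mem_cons_self), rfl⟩)
      (ih fun b hb => hω b (List.mem_cons_of_mem a hb))

lemma coord_eq_all (cs : CoxeterSystem M W) (A : Set B) {g : W}
    (hg : g ∈ Subgroup.closure (cs.simple '' A)) {b : B} (hb : b ∉ A) :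
    ∀ v : B →₀ ℝ, (rep M cs g v) b = v b := by
  induction hg using Subgroup.closure_induction with
  | mem z hz =>
    intro v
    obtain ⟨a, haA, rfl⟩ := hz
    rw [rep_simple]
    refine sg_coord M (fun h => hb ?_) v
    rw [h]; exact haA
  | one => intro v; rw [map_one, lone_apply]
  | mul z z' hz hz' ihz ihz' =>
    intro v
    rw [map_mul, lmul_apply, ihz, ihz']
  | inv z hz ih =>
    intro v
    have h2 := ih (rep M cs z⁻¹ v)
    rw [← lmul_apply, ← map_mul, mul_inv_cancel, map_one, lone_apply] at h2
    exact h2.symm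
end

open CoxPerp in
theorem odd_conj {B W : Type*} [Group W] {M : CoxeterMatrix B} (cs : CoxeterSystem M W) (x : B)
    {y : B} (hy : (oddGraph cs Set.univ).Reachable x y) :
    ∃ w ∈ Subgroup.closure (cs.simple '' (oddComponent cs Set.univ x)),
      w * cs.simple x * w⁻¹ = cs.simple y := by
  rw [SimpleGraph.reachable_iff_reflTransGen] at hy
  induction hy with
  | refl => exact ⟨1, one_mem _, by simp⟩
  | @tail b c hxb hadj ih =>
    obtain ⟨w, hwmem, hw⟩ := ih
    have hadj' : b ≠ c ∧ b ∈ Set.univ ∧ c ∈ Set.univ ∧ Odd (CoxPerp.m cs b c) := hadj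
    have hbc : b ≠ c := hadj'.1
    have hodd : Odd (CoxPerp.m cs b c) := hadj'.2.2.2
    have hmbc : CoxPerp.m cs b c = M b c := orderOf_simple_mul M cs b c
    rw [hmbc] at hodd
    obtain ⟨q, hq0⟩ := hodd
    have hq : M b c = 2 * q + 1 := by omega
    have hbmem : b ∈ oddComponent cs Set.univ x :=
      (SimpleGraph.reachable_iff_reflTransGen _ _).mpr hxb
    have hcmem : c ∈ oddComponent cs Set.univ x :=
      (SimpleGraph.reachable_iff_reflTransGen _ _).mpr (hxb.tail hadj)
    refine ⟨(cs.simple b * cs.simple c) ^ q * w, ?_, ?_⟩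
    · have h1 : cs.simple b ∈ cs.simple '' oddComponent cs Set.univ x := ⟨b, hbmem, rfl⟩
      have h2 : cs.simple c ∈ cs.simple '' oddComponent cs Set.univ x := ⟨c, hcmem, rfl⟩
      exact mul_mem (pow_mem (mul_mem (Subgroup.subset_closure h1)
        (Subgroup.subset_closure h2)) q) hwmem
    · have hg : ∀ g : W, (g * w) * cs.simple x * (g * w)⁻¹
          = g * (w * cs.simple x * w⁻¹) * g⁻¹ := by intro g; group
      rw [hg, hw]
      exact conj_simple_odd M cs hq

open CoxPerp in
theorem main {B W : Type*} [Group W] {M : CoxeterMatrix B}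
    (cs : CoxeterSystem M W) (x : B) (O E : Set B)
    (hO : O = oddComponent cs Set.univ x)
    (hE : E = {s | s ∉ O ∧ ∃ y ∈ O, m cs y s ≠ 0})
    (hfg : (perp cs Set.univ x).FG) :
    E.Finite := by
  classical
  obtain ⟨T0, hT0⟩ := hfg
  choose wrd hwrd using cs.wordProd_surjective
  set F : Finset B := T0.biUnion (fun g => (wrd g).toFinset) with hF
  have hperpF : perp cs Set.univ x ≤ Subgroup.closure (cs.simple '' (↑F : Set B)) := by
    rw [← hT0, Subgroup.closure_le]
    intro g hg
    rw [← hwrd g]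
    refine wordProd_mem_closure M cs _ _ fun b hb => ?_
    exact Finset.mem_coe.mpr (Finset.mem_biUnion.mpr ⟨g, hg, List.mem_toFinset.mpr hb⟩)
  refine Set.Finite.subset F.finite_toSet fun s hs => ?_
  by_contra hsF
  rw [hE] at hs
  obtain ⟨hsO, y, hyO, hmys⟩ := hs
  have hys : y ≠ s := fun h => hsO (h ▸ hyO)
  have hmeq : CoxPerp.m cs y s = M y s := orderOf_simple_mul M cs y s
  have hyreach : (oddGraph cs Set.univ).Reachable x y := by rw [hO] at hyO; exact hyO
  have hnotodd : ¬ Odd (CoxPerp.m cs y s) := by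
    intro hodd
    apply hsO
    rw [hO]
    exact hyreach.trans (SimpleGraph.Adj.reachable (G := oddGraph cs Set.univ) (u := y) (v := s)
      (show y ≠ s ∧ y ∈ Set.univ ∧ s ∈ Set.univ ∧ Odd (CoxPerp.m cs y s) from ⟨hys, trivial, trivial, hodd⟩))
  obtain ⟨k, hk⟩ : ∃ k, CoxPerp.m cs y s = 2 * k := by
    rcases Nat.even_or_odd (CoxPerp.m cs y s) with ⟨r, hr⟩ | ho
    · exact ⟨r, by omega⟩
    · exact absurd ho hnotodd
  have hk1 : 1 ≤ k := by
    rcases Nat.eq_zero_or_pos k with h0 | h1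
    · exfalso; apply hmys; rw [hk, h0]
    · exact h1
  have hMys : M y s = 2 * k := by rw [← hmeq, hk]
  have hm2' : 2 ≤ M y s := by omega
  obtain ⟨w, hwmem0, hw⟩ := odd_conj cs x hyreach
  rw [← hO] at hwmem0
  set c : W := cs.simple y * cs.simple s with hc
  set t : W := c ^ k * cs.simple y with ht
  have hrel : c ^ (2 * k) = 1 := by
    rw [hc, ← hMys]
    exact cs.simple_mul_simple_pow y s
  have hckinv : (c ^ k)⁻¹ = c ^ k := by
    have hck : c ^ k * c ^ k = 1 := by rw [← pow_add, ← two_mul]; exact hrel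
    exact (eq_inv_of_mul_eq_one_left hck).symm
  have hycy : SemiconjBy (cs.simple y) c c⁻¹ := by
    show cs.simple y * c = c⁻¹ * cs.simple y
    rw [hc, mul_inv_rev, cs.inv_simple, cs.inv_simple, cs.simple_mul_simple_cancel_left,
      cs.simple_mul_simple_cancel_right]
  have hsc2 : SemiconjBy (cs.simple y) c⁻¹ c := by
    show cs.simple y * c⁻¹ = c * cs.simple y
    rw [hc, mul_inv_rev, cs.inv_simple, cs.inv_simple, mul_assoc]
  have id1 : ∀ n : ℕ, cs.simple y * (c ^ n)⁻¹ = c ^ n * cs.simple y := by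
    intro n
    have h2 := (hsc2.pow_right n).eq
    rwa [inv_pow] at h2
  have hycky : cs.simple y * c ^ k = (c ^ k)⁻¹ * cs.simple y := by
    have h2 := (hycy.pow_right k).eq
    rwa [inv_pow] at h2
  have hL : t * cs.simple y = c ^ k := by
    rw [ht, mul_assoc, cs.simple_mul_simple_self, mul_one]
  have hR : cs.simple y * t = c ^ k := by
    rw [ht, ← mul_assoc, hycky, mul_assoc, cs.simple_mul_simple_self, mul_one, hckinv]
  have hcomm : t * cs.simple y = cs.simple y * t := hL.trans hR.symm
  have htne : t ≠ cs.simple y := by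
    intro h
    have hb : c ^ k = 1 := by rw [← hL, h, cs.simple_mul_simple_self]
    have hord : orderOf c = 2 * k := by
      rw [hc, orderOf_simple_mul M cs y s]
      exact hMys
    have hdvd := orderOf_dvd_of_pow_eq_one hb
    rw [hord] at hdvd
    have := Nat.le_of_dvd (by omega) hdvd
    omega
  set ρ : W := w⁻¹ * t * w with hρ
  have hx' : cs.simple x = w⁻¹ * cs.simple y * w := by rw [← hw]; group
  have hρx : ρ * cs.simple x = cs.simple x * ρ := by
    rw [hρ, hx']
    calc w⁻¹ * t * w * (w⁻¹ * cs.simple y * w)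
        = w⁻¹ * (t * cs.simple y) * w := by group
      _ = w⁻¹ * (cs.simple y * t) * w := by rw [hcomm]
      _ = w⁻¹ * cs.simple y * w * (w⁻¹ * t * w) := by group
  have hρne : ρ ≠ cs.simple x := by
    intro h
    apply htne
    have h2 : w⁻¹ * t * w = w⁻¹ * cs.simple y * w := by rw [← hρ, h, hx']
    exact mul_left_cancel (mul_right_cancel h2)
  have hmemtop : ∀ g : W, g ∈ parabolic cs Set.univ := by
    intro g
    rw [parabolic, Set.image_univ, cs.subgroup_closure_range_simple]
    exact Subgroup.mem_top g
  have hrefl : IsReflectionOf cs Set.univ ρ := by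
    rcases Nat.even_or_odd k with ⟨a, ha⟩ | ⟨a, ha⟩
    · have key : c ^ a * cs.simple y * (c ^ a)⁻¹ = t := by
        rw [mul_assoc, id1 a, ← mul_assoc, ← pow_add, ← ha, ← ht]
      refine ⟨w⁻¹ * c ^ a, hmemtop _, y, trivial, ?_⟩
      have hr : (w⁻¹ * c ^ a) * cs.simple y * (w⁻¹ * c ^ a)⁻¹
          = w⁻¹ * (c ^ a * cs.simple y * (c ^ a)⁻¹) * w := by group
      rw [hρ, hr, key]
    · have hcsy : cs.simple y * cs.simple s * cs.simple y = c * cs.simple y := by rw [hc]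
      have key : (c ^ a * cs.simple y) * cs.simple s * (c ^ a * cs.simple y)⁻¹ = t := by
        rw [mul_inv_rev, cs.inv_simple]
        calc c ^ a * cs.simple y * cs.simple s * (cs.simple y * (c ^ a)⁻¹)
            = c ^ a * (cs.simple y * cs.simple s * cs.simple y) * (c ^ a)⁻¹ := by group
          _ = c ^ a * (c * cs.simple y) * (c ^ a)⁻¹ := by rw [hcsy]
          _ = c ^ a * c * (cs.simple y * (c ^ a)⁻¹) := by group
          _ = c ^ a * c * (c ^ a * cs.simple y) := by rw [id1 a]
          _ = c ^ (a + 1 + a) * cs.simple y := by rw [pow_add, pow_add, pow_one]; group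
          _ = t := by rw [show a + 1 + a = k from by omega, ← ht]
      refine ⟨w⁻¹ * (c ^ a * cs.simple y), hmemtop _, s, trivial, ?_⟩
      have hr : (w⁻¹ * (c ^ a * cs.simple y)) * cs.simple s * (w⁻¹ * (c ^ a * cs.simple y))⁻¹
          = w⁻¹ * ((c ^ a * cs.simple y) * cs.simple s * (c ^ a * cs.simple y)⁻¹) * w := by group
      rw [hρ, hr, key]
  have hρperp : ρ ∈ perp cs Set.univ x :=
    Subgroup.subset_closure ⟨hrefl, hρne, hρx⟩
  have hρF : ρ ∈ Subgroup.closure (cs.simple '' (↑F : Set B)) := hperpF hρperp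
  have hwinc : w⁻¹ ∈ Subgroup.closure (cs.simple '' O) := inv_mem hwmem0
  have hwO : ∀ v : B →₀ ℝ, (rep M cs w⁻¹ v) s = v s := coord_eq_all M cs O hwinc hsO
  have hFs : ∀ v : B →₀ ℝ, (rep M cs ρ v) s = v s := coord_eq_all M cs (↑F) hρF hsF
  obtain ⟨p, hkp⟩ : ∃ p, k = p + 1 := ⟨k - 1, by omega⟩
  have hts : ((rep M cs t) (ee s)) s = -1 := by
    have hrept : rep M cs t = (sg M y * sg M s) ^ k * sg M y := by
      rw [ht, map_mul, map_pow, hc, map_mul]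
      simp only [rep_simple]
    rw [hrept, lmul_apply, sg_ee_ne M hys, map_add, map_smul, hkp, act2 M hys p,
      act1 M hys (p + 1)]
    have hTcos : Tval M y s = 2 * Real.cos (π / (M y s)) := rfl
    have hfin : Sv (Tval M y s) (2 * p + 3) = -1 := by
      rw [hTcos, show 2 * p + 3 = M.M y s + 1 from by omega]
      exact Sv_m1 hm2'
    have hrec : Sv (Tval M y s) (2 * p + 3)
        = Tval M y s * Sv (Tval M y s) (2 * p + 2) - Sv (Tval M y s) (2 * p + 1) := by
      rw [show 2 * p + 3 = (2 * p + 1) + 2 from by ring, Sv_add_two,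
        show 2 * p + 1 + 1 = 2 * p + 2 from rfl]
    rw [show 2 * (p + 1) + 1 = 2 * p + 3 from by ring, show 2 * (p + 1) = 2 * p + 2 from by ring]
    simp only [Finsupp.add_apply, Finsupp.neg_apply, Finsupp.smul_apply, smul_eq_mul, ee,
      Finsupp.single_eq_same, Finsupp.single_eq_of_ne' hys, mul_zero, mul_one, add_zero, zero_add]
    linarith [hfin, hrec]
  have e3 : ρ * w⁻¹ = w⁻¹ * t := by rw [hρ]; group
  have e1 : ((rep M cs (w⁻¹ * t)) (ee s)) s = -1 := by
    rw [map_mul, lmul_apply, hwO]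
    exact hts
  have e2 : ((rep M cs (ρ * w⁻¹)) (ee s)) s = ((rep M cs w⁻¹) (ee s)) s := by
    rw [map_mul, lmul_apply]
    exact hFs _
  have e4 : ((rep M cs w⁻¹) (ee s)) s = 1 := by
    rw [hwO]
    simp [ee]
  rw [e3, e1, e4] at e2
  norm_num at e2

end CoxPerpAux


open CoxPerp in
/-- if `W^{⊥x}` is finitely generated then the set `E` is finite. -/
theorem statement_10 {B W : Type*} [Group W] {M : CoxeterMatrix B}
    (cs : CoxeterSystem M W) (x : B) (O E : Set B)
    (hO : O = oddComponent cs Set.univ x)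
    (hE : E = {s | s ∉ O ∧ ∃ y ∈ O, m cs y s ≠ 0})
    (hfg : (perp cs Set.univ x).FG) :
    E.Finite :=
  CoxPerpAux.main cs x O E hO hE hfg
end

section
/- Let (W,S) be a Coxeter system, x ∈ I ⊆ S, and y ∈ I_{∼x}^{odd}. Then there exists w ∈ W_I such that w x w^{-1} = y and w W_I^{⊥x} w^{-1} = W_I^{⊥y}; in particular, W_I^{⊥x} is finitely generated if and only if W_I^{⊥y} is finitely generated. -/
namespace CoxPerpAux

open CoxPerp

variable {B W : Type*} [Group W] {M : CoxeterMatrix B}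

lemma simple_mem_parabolic (cs : CoxeterSystem M W) {I : Set B} {x : B} (hx : x ∈ I) :
    cs.simple x ∈ parabolic cs I :=
  Subgroup.subset_closure ⟨x, hx, rfl⟩

lemma gen_subset (cs : CoxeterSystem M W) (I : Set B) (x y : B) (w : W)
    (hw : w ∈ parabolic cs I)
    (hxy : w * cs.simple x * w⁻¹ = cs.simple y) :
    (fun r => w * r * w⁻¹) '' {r | IsReflectionOf cs I r ∧ r ≠ cs.simple x ∧
        r * cs.simple x = cs.simple x * r}
      ⊆ {r | IsReflectionOf cs I r ∧ r ≠ cs.simple y ∧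
        r * cs.simple y = cs.simple y * r} := by
  rintro _ ⟨r, ⟨⟨u, hu, s, hs, rfl⟩, hne, hcomm⟩, rfl⟩
  refine ⟨⟨w * u, mul_mem hw hu, s, hs, by group⟩, ?_, ?_⟩
  · intro h
    apply hne
    have : w * (u * cs.simple s * u⁻¹) * w⁻¹ = w * cs.simple x * w⁻¹ := h.trans hxy.symm
    have := congrArg (fun z => w⁻¹ * z * w) this
    simpa [mul_assoc] using this
  · rw [← hxy]
    have : u * cs.simple s * u⁻¹ * cs.simple x * (u * cs.simple s * u⁻¹)⁻¹
        = cs.simple x := by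
      rw [show u * cs.simple s * u⁻¹ * cs.simple x = cs.simple x * (u * cs.simple s * u⁻¹) from hcomm]
      group
    calc w * (u * cs.simple s * u⁻¹) * w⁻¹ * (w * cs.simple x * w⁻¹)
        = w * ((u * cs.simple s * u⁻¹) * cs.simple x) * w⁻¹ := by group
      _ = w * (cs.simple x * (u * cs.simple s * u⁻¹)) * w⁻¹ := by rw [hcomm]
      _ = w * cs.simple x * w⁻¹ * (w * (u * cs.simple s * u⁻¹) * w⁻¹) := by group

lemma conj_perp (cs : CoxeterSystem M W) (I : Set B) (x y : B) (w : W)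
    (hw : w ∈ parabolic cs I)
    (hxy : w * cs.simple x * w⁻¹ = cs.simple y) :
    (perp cs I x).map (MulAut.conj w).toMonoidHom = perp cs I y := by
  have hyx : w⁻¹ * cs.simple y * (w⁻¹)⁻¹ = cs.simple x := by
    rw [← hxy]; group
  have h1 := gen_subset cs I x y w hw hxy
  have h2 := gen_subset cs I y x w⁻¹ (inv_mem hw) hyx
  have himg : (fun r => w * r * w⁻¹) '' {r | IsReflectionOf cs I r ∧ r ≠ cs.simple x ∧
        r * cs.simple x = cs.simple x * r}
      = {r | IsReflectionOf cs I r ∧ r ≠ cs.simple y ∧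
        r * cs.simple y = cs.simple y * r} := by
    refine le_antisymm h1 ?_
    intro r hr
    refine ⟨w⁻¹ * r * w⁻¹⁻¹, h2 ⟨r, hr, rfl⟩, by group⟩
  have hfun : ⇑(MulAut.conj w).toMonoidHom = fun r => w * r * w⁻¹ := by
    ext r; simp [MulAut.conj_apply]
  unfold perp
  rw [MonoidHom.map_closure, hfun, himg]

lemma fg_iff_of_conj (cs : CoxeterSystem M W) (I : Set B) (x y : B) (w : W)
    (hw : w ∈ parabolic cs I)
    (hxy : w * cs.simple x * w⁻¹ = cs.simple y) :
    (perp cs I x).FG ↔ (perp cs I y).FG := by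
  have key : ∀ (a b : B) (v : W), v ∈ parabolic cs I →
      v * cs.simple a * v⁻¹ = cs.simple b → (perp cs I a).FG → (perp cs I b).FG := by
    intro a b v hv hab hfg
    rw [Subgroup.fg_iff] at hfg ⊢
    obtain ⟨S, hS, hSfin⟩ := hfg
    refine ⟨(fun r => v * r * v⁻¹) '' S, ?_, hSfin.image _⟩
    have := conj_perp cs I a b v hv hab
    rw [← hS, MonoidHom.map_closure] at this
    have hfun : ⇑(MulAut.conj v).toMonoidHom = fun r => v * r * v⁻¹ := by
      ext r; simp [MulAut.conj_apply]
    rw [hfun] at this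
    exact this
  constructor
  · exact key x y w hw hxy
  · exact key y x w⁻¹ (inv_mem hw) (by rw [← hxy]; group)

/-- From an odd edge, conjugating element. -/
lemma odd_edge_conj (cs : CoxeterSystem M W) {I : Set B} {s t : B}
    (h : (oddGraph cs I).Adj s t) :
    ∃ w ∈ parabolic cs I, w * cs.simple s * w⁻¹ = cs.simple t := by
  obtain ⟨hne, hs, ht, k, hk⟩ := h
  set r := cs.simple s * cs.simple t with hr
  refine ⟨r ^ k, ?_, ?_⟩
  · exact pow_mem (mul_mem (simple_mem_parabolic cs hs) (simple_mem_parabolic cs ht)) k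
  · have hss : cs.simple s * cs.simple s = 1 := by
      simpa using cs.simple_mul_simple_self s
    have htt : cs.simple t * cs.simple t = 1 := by
      simpa using cs.simple_mul_simple_self t
    have hsinv : (cs.simple s)⁻¹ = cs.simple s := by
      rw [inv_eq_iff_mul_eq_one, hss]
    have htinv : (cs.simple t)⁻¹ = cs.simple t := by
      rw [inv_eq_iff_mul_eq_one, htt]
    have hsrs : cs.simple s * r * cs.simple s = r⁻¹ := by
      rw [hr, mul_inv_rev, hsinv, htinv]
      calc cs.simple s * (cs.simple s * cs.simple t) * cs.simple s
          = (cs.simple s * cs.simple s) * (cs.simple t * cs.simple s) := by group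
        _ = cs.simple t * cs.simple s := by rw [hss, one_mul]
    -- s * r^{-k} * s = r^k, so r^k * s * r^{-k} = r^{2k} * s
    have hconj : ∀ n : ℕ, cs.simple s * r ^ n * cs.simple s = r⁻¹ ^ n := by
      intro n
      induction n with
      | zero => simp [hss]
      | succ n ih =>
        have hsc : ∀ a : W, cs.simple s * (cs.simple s * a) = a := fun a => by
          rw [← mul_assoc, hss, one_mul]
        calc cs.simple s * r ^ (n+1) * cs.simple s
            = (cs.simple s * r ^ n * cs.simple s) * (cs.simple s * r * cs.simple s) := by
              simp [pow_succ, mul_assoc, hsc, hr]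
          _ = r⁻¹ ^ n * r⁻¹ := by rw [ih, hsrs]
          _ = r⁻¹ ^ (n+1) := by rw [pow_succ]
    have hord : r ^ (2 * k + 1) = 1 := by
      have : orderOf r = 2 * k + 1 := by rw [hr, ← hk]; rfl
      rw [← this]; exact pow_orderOf_eq_one r
    -- r^k * s * (r^k)⁻¹ = r^k * (s * r^{-k} * s) * s = r^k * r^k * s = r^{2k} * s
    have step : cs.simple s * (r ^ k)⁻¹ = r ^ k * cs.simple s := by
      have A : (r ^ k)⁻¹ = cs.simple s * r ^ k * cs.simple s := by
        rw [hconj k, inv_pow]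
      rw [A, ← mul_assoc, ← mul_assoc, hss, one_mul]
    calc r ^ k * cs.simple s * (r ^ k)⁻¹
        = r ^ k * (cs.simple s * (r ^ k)⁻¹) := by rw [mul_assoc]
      _ = r ^ k * (r ^ k * cs.simple s) := by rw [step]
      _ = r ^ (2 * k) * cs.simple s := by rw [← mul_assoc, ← pow_add, two_mul]
      _ = cs.simple t := by
          have : r ^ (2 * k) = r⁻¹ := by
            rw [eq_inv_iff_mul_eq_one, ← pow_succ, hord]
          rw [this, hr, mul_inv_rev, hsinv, htinv, mul_assoc, hss, mul_one]

end CoxPerpAux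

open CoxPerp in
/-- generators in the same odd component give conjugate perpendicular
subgroups. -/
theorem statement_19 {B W : Type*} [Group W] {M : CoxeterMatrix B}
    (cs : CoxeterSystem M W) (x : B) (I : Set B) (hx : x ∈ I)
    (y : B) (hy : y ∈ oddComponent cs I x) :
    ∃ w ∈ parabolic cs I, w * cs.simple x * w⁻¹ = cs.simple y ∧
      (perp cs I x).map (MulAut.conj w).toMonoidHom = perp cs I y ∧
      ((perp cs I x).FG ↔ (perp cs I y).FG) := by
  obtain ⟨p⟩ := hy
  suffices h : ∃ w ∈ parabolic cs I, w * cs.simple x * w⁻¹ = cs.simple y by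
    obtain ⟨w, hw, hxy⟩ := h
    exact ⟨w, hw, hxy, CoxPerpAux.conj_perp cs I x y w hw hxy,
      CoxPerpAux.fg_iff_of_conj cs I x y w hw hxy⟩
  clear hx
  induction p with
  | nil => exact ⟨1, one_mem _, by simp⟩
  | @cons a b c h p ih =>
    obtain ⟨w, hw, hzy⟩ := ih
    obtain ⟨w0, hw0, hxz⟩ := CoxPerpAux.odd_edge_conj cs h
    refine ⟨w * w0, mul_mem hw hw0, ?_⟩
    have e : w * w0 * cs.simple a * (w * w0)⁻¹ = w * (w0 * cs.simple a * w0⁻¹) * w⁻¹ := by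
      group
    rw [e, hxz, hzy]
end
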